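/- arXiv:1604.07029 — 2 statements merged into one kernel-verified Lean document; each statement's English description precedes it below -/
import Mathlib

section
/- Let A ∈ (C^{n,α})^{m×m} and suppose a differentiable function y : [a,b] → ℂ^m satisfies the system y'(t) + A(t)y(t) = f(t) on [a,b] for some right-hand side f ∈ (C^{n,α})^m. Then y ∈ (C^{n+1,α})^m. Moreover, as f runs through the whole space (C^{n,α})^m, the solutions y to this system run through the whole space (C^{n+1,α})^m. -/
open Set Filter Topology

noncomputable def supIcc (a b : ℝ) (g : ℝ → ℂ) : ℝ :=
  sSup ((fun t => ‖g t‖) '' Set.Icc a b)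

noncomputable def cNorm (a b : ℝ) (l : ℕ) (x : ℝ → ℂ) : ℝ :=
  ∑ j ∈ Finset.range (l + 1), supIcc a b (iteratedDerivWithin j x (Set.Icc a b))

noncomputable def holderSemi (a b α : ℝ) (g : ℝ → ℂ) : ℝ :=
  sSup {r : ℝ | ∃ s ∈ Set.Icc a b, ∃ t ∈ Set.Icc a b, s ≠ t ∧ r = ‖g s - g t‖ / |s - t| ^ α}

noncomputable def holderNorm (a b : ℝ) (l : ℕ) (α : ℝ) (x : ℝ → ℂ) : ℝ :=
  cNorm a b l x +
    (if α = 0 then 0 else holderSemi a b α (iteratedDerivWithin l x (Set.Icc a b)))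

def InHolder (a b : ℝ) (l : ℕ) (α : ℝ) (x : ℝ → ℂ) : Prop :=
  ContDiffOn ℝ l x (Set.Icc a b) ∧
    (α = 0 ∨ ∃ K : ℝ, ∀ s ∈ Set.Icc a b, ∀ t ∈ Set.Icc a b,
      ‖iteratedDerivWithin l x (Set.Icc a b) s - iteratedDerivWithin l x (Set.Icc a b) t‖
        ≤ K * |s - t| ^ α)

def InHolderV (a b : ℝ) (l : ℕ) (α : ℝ) {m : ℕ} (y : ℝ → Fin m → ℂ) : Prop :=
  ∀ i, InHolder a b l α fun t => y t i

noncomputable def holderNormV (a b : ℝ) (l : ℕ) (α : ℝ) {m : ℕ} (y : ℝ → Fin m → ℂ) : ℝ :=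
  ∑ i, holderNorm a b l α fun t => y t i

def InHolderM (a b : ℝ) (l : ℕ) (α : ℝ) {m : ℕ} (A : ℝ → Matrix (Fin m) (Fin m) ℂ) : Prop :=
  ∀ i j, InHolder a b l α fun t => A t i j

noncomputable def holderNormM (a b : ℝ) (l : ℕ) (α : ℝ) {m : ℕ}
    (A : ℝ → Matrix (Fin m) (Fin m) ℂ) : ℝ :=
  ∑ i, ∑ j, holderNorm a b l α fun t => A t i j

noncomputable def Lop (a b : ℝ) {m : ℕ} (A : ℝ → Matrix (Fin m) (Fin m) ℂ)
    (y : ℝ → Fin m → ℂ) : ℝ → Fin m → ℂ :=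
  fun t i => derivWithin (fun s => y s i) (Set.Icc a b) t + (A t).mulVec (y t) i

def SolvesV (a b : ℝ) {m : ℕ} (A : ℝ → Matrix (Fin m) (Fin m) ℂ)
    (y f : ℝ → Fin m → ℂ) : Prop :=
  ∀ t ∈ Set.Icc a b, ∀ i, Lop a b A y t i = f t i

section holder
variable {a b α : ℝ}

/-- α-Hölder condition on `Icc a b` with some constant. -/
def HolderOn (a b α : ℝ) (g : ℝ → ℂ) : Prop :=
  ∃ K : ℝ, ∀ s ∈ Set.Icc a b, ∀ t ∈ Set.Icc a b, ‖g s - g t‖ ≤ K * |s - t| ^ α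

lemma holder_key (hab : a < b) (hα0 : 0 ≤ α) (hα1 : α ≤ 1) {r : ℝ} (hr0 : 0 ≤ r)
    (hrb : r ≤ b - a) : r ≤ (1 + (b - a)) * r ^ α := by
  have hba : 0 < b - a := by linarith
  rcases eq_or_lt_of_le hr0 with h | h
  · have : (0:ℝ) ≤ (1 + (b - a)) * r ^ α := by positivity
    linarith [this, h]
  rcases le_or_gt r 1 with h1 | h1
  · have h2 : r ^ (1:ℝ) ≤ r ^ α := Real.rpow_le_rpow_of_exponent_ge h h1 hα1
    rw [Real.rpow_one] at h2
    have h3 : (0:ℝ) ≤ r ^ α := Real.rpow_nonneg hr0 α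
    nlinarith
  · have h2 : (1:ℝ) ≤ r ^ α := Real.one_le_rpow h1.le hα0
    nlinarith

lemma holderOn_of_lip (hab : a < b) (hα0 : 0 ≤ α) (hα1 : α ≤ 1) {g : ℝ → ℂ} {L : ℝ}
    (hL : ∀ s ∈ Set.Icc a b, ∀ t ∈ Set.Icc a b, ‖g s - g t‖ ≤ L * |s - t|) :
    HolderOn a b α g := by
  refine ⟨max L 0 * (1 + (b - a)), fun s hs t ht => ?_⟩
  have hr0 : (0:ℝ) ≤ |s - t| := abs_nonneg _
  have hrb : |s - t| ≤ b - a := by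
    rw [abs_sub_le_iff]; constructor <;> [skip; skip] <;>
      · obtain ⟨h1, h2⟩ := hs; obtain ⟨h3, h4⟩ := ht; linarith
  have key := holder_key hab hα0 hα1 hr0 hrb
  calc ‖g s - g t‖ ≤ L * |s - t| := hL s hs t ht
    _ ≤ max L 0 * |s - t| := by
        apply mul_le_mul_of_nonneg_right (le_max_left _ _) hr0
    _ ≤ max L 0 * ((1 + (b - a)) * |s - t| ^ α) := by
        apply mul_le_mul_of_nonneg_left key (le_max_right _ _)
    _ = max L 0 * (1 + (b - a)) * |s - t| ^ α := by ring

lemma holderOn_of_C1 (hab : a < b) (hα0 : 0 ≤ α) (hα1 : α ≤ 1) {g : ℝ → ℂ}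
    (hg : DifferentiableOn ℝ g (Set.Icc a b))
    (hg' : ContinuousOn (derivWithin g (Set.Icc a b)) (Set.Icc a b)) :
    HolderOn a b α g := by
  obtain ⟨L, hL⟩ := isCompact_Icc.exists_bound_of_continuousOn hg'
  apply holderOn_of_lip hab hα0 hα1 (L := L)
  intro s hs t ht
  have := Convex.norm_image_sub_le_of_norm_derivWithin_le hg hL (convex_Icc a b) ht hs
  rwa [Real.norm_eq_abs] at this

lemma holderOn_add {g h : ℝ → ℂ} (hg : HolderOn a b α g) (hh : HolderOn a b α h) :
    HolderOn a b α (fun t => g t + h t) := by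
  obtain ⟨K₁, h₁⟩ := hg; obtain ⟨K₂, h₂⟩ := hh
  refine ⟨K₁ + K₂, fun s hs t ht => ?_⟩
  calc ‖g s + h s - (g t + h t)‖ = ‖(g s - g t) + (h s - h t)‖ := by ring_nf
    _ ≤ ‖g s - g t‖ + ‖h s - h t‖ := norm_add_le _ _
    _ ≤ K₁ * |s - t| ^ α + K₂ * |s - t| ^ α := add_le_add (h₁ s hs t ht) (h₂ s hs t ht)
    _ = (K₁ + K₂) * |s - t| ^ α := by ring

lemma holderOn_sub {g h : ℝ → ℂ} (hg : HolderOn a b α g) (hh : HolderOn a b α h) :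
    HolderOn a b α (fun t => g t - h t) := by
  obtain ⟨K₁, h₁⟩ := hg; obtain ⟨K₂, h₂⟩ := hh
  refine ⟨K₁ + K₂, fun s hs t ht => ?_⟩
  calc ‖g s - h s - (g t - h t)‖ = ‖(g s - g t) - (h s - h t)‖ := by ring_nf
    _ ≤ ‖g s - g t‖ + ‖h s - h t‖ := norm_sub_le _ _
    _ ≤ K₁ * |s - t| ^ α + K₂ * |s - t| ^ α := add_le_add (h₁ s hs t ht) (h₂ s hs t ht)
    _ = (K₁ + K₂) * |s - t| ^ α := by ring

lemma holderOn_mul {g h : ℝ → ℂ}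
    (hgc : ContinuousOn g (Set.Icc a b)) (hhc : ContinuousOn h (Set.Icc a b))
    (hg : HolderOn a b α g) (hh : HolderOn a b α h) :
    HolderOn a b α (fun t => g t * h t) := by
  obtain ⟨K₁, h₁⟩ := hg; obtain ⟨K₂, h₂⟩ := hh
  obtain ⟨M₁, hM₁⟩ := isCompact_Icc.exists_bound_of_continuousOn hgc
  obtain ⟨M₂, hM₂⟩ := isCompact_Icc.exists_bound_of_continuousOn hhc
  refine ⟨M₁ * K₂ + M₂ * K₁, fun s hs t ht => ?_⟩
  have e : g s * h s - g t * h t = g s * (h s - h t) + (g s - g t) * h t := by ring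
  have hM₁0 : 0 ≤ M₁ := le_trans (norm_nonneg _) (hM₁ s hs)
  have hM₂0 : 0 ≤ M₂ := le_trans (norm_nonneg _) (hM₂ t ht)
  calc ‖g s * h s - g t * h t‖ ≤ ‖g s * (h s - h t)‖ + ‖(g s - g t) * h t‖ := by
        rw [e]; exact norm_add_le _ _
    _ = ‖g s‖ * ‖h s - h t‖ + ‖g s - g t‖ * ‖h t‖ := by rw [norm_mul, norm_mul]
    _ ≤ M₁ * (K₂ * |s - t| ^ α) + (K₁ * |s - t| ^ α) * M₂ := by
        apply add_le_add
        · exact mul_le_mul (hM₁ s hs) (h₂ s hs t ht) (norm_nonneg _) hM₁0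
        · exact mul_le_mul (h₁ s hs t ht) (hM₂ t ht) (norm_nonneg _)
            (le_trans (norm_nonneg _) (h₁ s hs t ht))
    _ = (M₁ * K₂ + M₂ * K₁) * |s - t| ^ α := by ring

end holder
section inholder
variable {a b α : ℝ}

lemma inHolder_of_contDiffOn_succ (hab : a < b) (hα0 : 0 ≤ α) (hα1 : α ≤ 1) {l : ℕ} {x : ℝ → ℂ}
    (h : ContDiffOn ℝ (l + 1) x (Set.Icc a b)) : InHolder a b l α x := by
  have udo : UniqueDiffOn ℝ (Set.Icc a b) := uniqueDiffOn_Icc hab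
  constructor
  · exact h.of_le (by exact_mod_cast Nat.le_succ l)
  · refine Or.inr ?_
    have hdiff : DifferentiableOn ℝ (iteratedDerivWithin l x (Set.Icc a b)) (Set.Icc a b) :=
      h.differentiableOn_iteratedDerivWithin (by exact_mod_cast Nat.lt_succ_self l) udo
    have hcont : ContinuousOn (iteratedDerivWithin (l + 1) x (Set.Icc a b)) (Set.Icc a b) :=
      h.continuousOn_iteratedDerivWithin (le_refl _) udo
    have hcont' : ContinuousOn
        (derivWithin (iteratedDerivWithin l x (Set.Icc a b)) (Set.Icc a b)) (Set.Icc a b) := by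
      apply hcont.congr
      intro t ht
      exact (congrFun iteratedDerivWithin_succ t).symm
    exact holderOn_of_C1 hab hα0 hα1 hdiff hcont'

lemma inHolder_down (hab : a < b) (hα0 : 0 ≤ α) (hα1 : α ≤ 1) {l : ℕ} {x : ℝ → ℂ}
    (h : InHolder a b (l + 1) α x) : InHolder a b l α x :=
  inHolder_of_contDiffOn_succ hab hα0 hα1 h.1

lemma inHolder_derivWithin (hab : a < b) {l : ℕ} {x : ℝ → ℂ}
    (h : InHolder a b (l + 1) α x) :
    InHolder a b l α (derivWithin x (Set.Icc a b)) := by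
  have udo : UniqueDiffOn ℝ (Set.Icc a b) := uniqueDiffOn_Icc hab
  constructor
  · exact h.1.derivWithin udo (by exact_mod_cast le_refl (l+1))
  · rcases h.2 with h0 | ⟨K, hK⟩
    · exact Or.inl h0
    · refine Or.inr ⟨K, fun s hs t ht => ?_⟩
      rw [← iteratedDerivWithin_succ']
      exact hK s hs t ht

lemma inHolder_const (hab : a < b) (hα0 : 0 ≤ α) (hα1 : α ≤ 1) {l : ℕ} (c : ℂ) :
    InHolder a b l α (fun _ => c) :=
  inHolder_of_contDiffOn_succ hab hα0 hα1 contDiffOn_const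

lemma inHolder_add' (hab : a < b) {l : ℕ} {x y : ℝ → ℂ}
    (hx : InHolder a b l α x) (hy : InHolder a b l α y) :
    InHolder a b l α (fun t => x t + y t) := by
  have udo : UniqueDiffOn ℝ (Set.Icc a b) := uniqueDiffOn_Icc hab
  refine ⟨hx.1.add hy.1, ?_⟩
  rcases hx.2 with h0 | ⟨K₁, h₁⟩
  · exact Or.inl h0
  rcases hy.2 with h0 | ⟨K₂, h₂⟩
  · exact Or.inl h0
  refine Or.inr ?_
  have e : ∀ r ∈ Set.Icc a b, iteratedDerivWithin l (fun t => x t + y t) (Set.Icc a b) r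
      = iteratedDerivWithin l x (Set.Icc a b) r + iteratedDerivWithin l y (Set.Icc a b) r :=
    fun r hr => iteratedDerivWithin_add hr udo (hx.1 r hr) (hy.1 r hr)
  obtain ⟨K, hK⟩ := holderOn_add ⟨K₁, h₁⟩ ⟨K₂, h₂⟩
  refine ⟨K, fun s hs t ht => ?_⟩
  rw [e s hs, e t ht]
  exact hK s hs t ht

lemma inHolder_sub' (hab : a < b) {l : ℕ} {x y : ℝ → ℂ}
    (hx : InHolder a b l α x) (hy : InHolder a b l α y) :
    InHolder a b l α (fun t => x t - y t) := by
  have udo : UniqueDiffOn ℝ (Set.Icc a b) := uniqueDiffOn_Icc hab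
  refine ⟨hx.1.sub hy.1, ?_⟩
  rcases hx.2 with h0 | ⟨K₁, h₁⟩
  · exact Or.inl h0
  rcases hy.2 with h0 | ⟨K₂, h₂⟩
  · exact Or.inl h0
  refine Or.inr ?_
  have e : ∀ r ∈ Set.Icc a b, iteratedDerivWithin l (fun t => x t - y t) (Set.Icc a b) r
      = iteratedDerivWithin l x (Set.Icc a b) r - iteratedDerivWithin l y (Set.Icc a b) r :=
    fun r hr => iteratedDerivWithin_sub hr udo (hx.1 r hr) (hy.1 r hr)
  obtain ⟨K, hK⟩ := holderOn_sub ⟨K₁, h₁⟩ ⟨K₂, h₂⟩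
  refine ⟨K, fun s hs t ht => ?_⟩
  rw [e s hs, e t ht]
  exact hK s hs t ht

lemma inHolder_sum (hab : a < b) (hα0 : 0 ≤ α) (hα1 : α ≤ 1) {l : ℕ} {ι : Type*}
    (s : Finset ι) (F : ι → ℝ → ℂ) (h : ∀ i ∈ s, InHolder a b l α (F i)) :
    InHolder a b l α (fun t => ∑ i ∈ s, F i t) := by
  classical
  induction s using Finset.induction_on with
  | empty => simpa using inHolder_const hab hα0 hα1 0
  | insert c s' hni ih =>
    simp only [Finset.sum_insert hni]
    exact inHolder_add' hab (h c (Finset.mem_insert_self c s'))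
      (ih fun i hi => h i (Finset.mem_insert_of_mem hi))

lemma inHolder_mul' (hab : a < b) (hα0 : 0 ≤ α) (hα1 : α ≤ 1) : ∀ {l : ℕ} {x y : ℝ → ℂ},
    InHolder a b l α x → InHolder a b l α y → InHolder a b l α (fun t => x t * y t) := by
  have udo : UniqueDiffOn ℝ (Set.Icc a b) := uniqueDiffOn_Icc hab
  intro l
  induction l with
  | zero =>
    intro x y hx hy
    refine ⟨hx.1.mul hy.1, ?_⟩
    rcases hx.2 with h0 | ⟨K₁, h₁⟩
    · exact Or.inl h0
    rcases hy.2 with h0 | ⟨K₂, h₂⟩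
    · exact Or.inl h0
    refine Or.inr ?_
    simp only [iteratedDerivWithin_zero] at h₁ h₂ ⊢
    exact holderOn_mul hx.1.continuousOn hy.1.continuousOn ⟨K₁, h₁⟩ ⟨K₂, h₂⟩
  | succ l IH =>
    intro x y hx hy
    refine ⟨hx.1.mul hy.1, ?_⟩
    by_cases hα : α = 0
    · exact Or.inl hα
    refine Or.inr ?_
    have hu : InHolder a b l α (fun t =>
        derivWithin x (Set.Icc a b) t * y t + x t * derivWithin y (Set.Icc a b) t) :=
      inHolder_add' hab (IH (inHolder_derivWithin hab hx) (inHolder_down hab hα0 hα1 hy))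
        (IH (inHolder_down hab hα0 hα1 hx) (inHolder_derivWithin hab hy))
    rcases hu.2 with h0 | ⟨K, hK⟩
    · exact absurd h0 hα
    have hdx : DifferentiableOn ℝ x (Set.Icc a b) :=
      hx.1.differentiableOn (by simp)
    have hdy : DifferentiableOn ℝ y (Set.Icc a b) :=
      hy.1.differentiableOn (by simp)
    have e : ∀ r ∈ Set.Icc a b,
        iteratedDerivWithin (l + 1) (fun t => x t * y t) (Set.Icc a b) r
        = iteratedDerivWithin l (fun t =>
            derivWithin x (Set.Icc a b) t * y t + x t * derivWithin y (Set.Icc a b) t)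
            (Set.Icc a b) r := by
      intro r hr
      rw [iteratedDerivWithin_succ']
      refine iteratedDerivWithin_congr ?_ hr
      intro p hp
      exact derivWithin_mul (hdx p hp) (hdy p hp)
    refine ⟨K, fun s hs t ht => ?_⟩
    rw [e s hs, e t ht]
    exact hK s hs t ht

end inholder

section reg
variable {a b α : ℝ} {n m : ℕ}

lemma regularity (hab : a < b) (hα0 : 0 ≤ α) (hα1 : α ≤ 1)
    {A : ℝ → Matrix (Fin m) (Fin m) ℂ} (hA : InHolderM a b n α A)
    {f y : ℝ → Fin m → ℂ} (hf : InHolderV a b n α f)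
    (hy : ∀ i, DifferentiableOn ℝ (fun t => y t i) (Set.Icc a b))
    (hsol : ∀ t ∈ Set.Icc a b, ∀ i, derivWithin (fun s => y s i) (Set.Icc a b) t
      = f t i - ∑ j, A t i j * y t j) :
    InHolderV a b (n + 1) α y := by
  have udo : UniqueDiffOn ℝ (Set.Icc a b) := uniqueDiffOn_Icc hab
  -- inductive regularity bootstrap
  have contD : ∀ k : ℕ, k ≤ n + 1 → ∀ i, ContDiffOn ℝ k (fun t => y t i) (Set.Icc a b) := by
    intro k
    induction k with
    | zero => intro _ i; exact contDiffOn_zero.mpr (hy i).continuousOn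
    | succ k IH =>
      intro hk i
      have hk' : k ≤ n + 1 := Nat.le_of_succ_le hk
      have hkn : k ≤ n := Nat.lt_succ_iff.mp hk
      have hg : ContDiffOn ℝ k (fun t => f t i - ∑ j, A t i j * y t j) (Set.Icc a b) := by
        apply ContDiffOn.sub
        · exact (hf i).1.of_le (by exact_mod_cast hkn)
        · apply ContDiffOn.sum
          intro j _
          exact ((hA i j).1.of_le (by exact_mod_cast hkn)).mul (IH hk' j)
      have : ContDiffOn ℝ (k + 1 : ℕ) (fun t => y t i) (Set.Icc a b) := by
        rw [show ((k + 1 : ℕ) : WithTop ℕ∞) = (k : WithTop ℕ∞) + 1 by exact_mod_cast rfl,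
          contDiffOn_succ_iff_derivWithin udo]
        refine ⟨hy i, by simp, ?_⟩
        exact hg.congr fun t ht => hsol t ht i
      exact this
  intro i
  refine ⟨contD (n + 1) le_rfl i, ?_⟩
  by_cases hα : α = 0
  · exact Or.inl hα
  refine Or.inr ?_
  have hgH : InHolder a b n α (fun t => f t i - ∑ j, A t i j * y t j) := by
    apply inHolder_sub' hab (hf i)
    apply inHolder_sum hab hα0 hα1
    intro j _
    exact inHolder_mul' hab hα0 hα1 (hA i j)
      (inHolder_of_contDiffOn_succ hab hα0 hα1 (contD (n + 1) le_rfl j))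
  rcases hgH.2 with h0 | ⟨K, hK⟩
  · exact absurd h0 hα
  have e : ∀ r ∈ Set.Icc a b,
      iteratedDerivWithin (n + 1) (fun t => y t i) (Set.Icc a b) r
      = iteratedDerivWithin n (fun t => f t i - ∑ j, A t i j * y t j) (Set.Icc a b) r := by
    intro r hr
    rw [iteratedDerivWithin_succ']
    refine iteratedDerivWithin_congr ?_ hr
    intro p hp
    exact hsol p hp i
  refine ⟨K, fun s hs t ht => ?_⟩
  rw [e s hs, e t ht]
  exact hK s hs t ht

lemma lop_inHolder (hab : a < b) (hα0 : 0 ≤ α) (hα1 : α ≤ 1)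
    {A : ℝ → Matrix (Fin m) (Fin m) ℂ} (hA : InHolderM a b n α A)
    {y : ℝ → Fin m → ℂ} (hy : InHolderV a b (n + 1) α y) :
    InHolderV a b n α (Lop a b A y) := by
  intro i
  have e : (fun t => Lop a b A y t i)
      = fun t => derivWithin (fun s => y s i) (Set.Icc a b) t + ∑ j, A t i j * y t j := by
    funext t
    simp [Lop, Matrix.mulVec, dotProduct]
  rw [e]
  apply inHolder_add' hab (inHolder_derivWithin hab (hy i))
  apply inHolder_sum hab hα0 hα1
  intro j _
  exact inHolder_mul' hab hα0 hα1 (hA i j)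
    (inHolder_down hab hα0 hα1 (hy j))

end reg

section ode

/-- Glue two ODE solutions on adjacent intervals. -/
lemma glue_sol {E : Type*} [NormedAddCommGroup E] [NormedSpace ℝ E] {v : ℝ → E → E}
    {c d e : ℝ} (hcd : c ≤ d) (hde : d ≤ e) {u w : ℝ → E}
    (hu : ∀ t ∈ Set.Icc c d, HasDerivWithinAt u (v t (u t)) (Set.Icc c d) t)
    (hw : ∀ t ∈ Set.Icc d e, HasDerivWithinAt w (v t (w t)) (Set.Icc d e) t)
    (huw : u d = w d) :
    ∀ t ∈ Set.Icc c e, HasDerivWithinAt (fun s => if s ≤ d then u s else w s)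
      (v t ((fun s => if s ≤ d then u s else w s) t)) (Set.Icc c e) t := by
  set z : ℝ → E := fun s => if s ≤ d then u s else w s with hz
  have hz1 : Set.EqOn z u (Set.Icc c d) := fun s hs => if_pos hs.2
  have hz2 : Set.EqOn z w (Set.Icc d e) := by
    intro s hs
    by_cases h : s ≤ d
    · have : s = d := le_antisymm h hs.1
      simp [hz, this, huw]
    · simp [hz, h]
  intro t ht
  rcases lt_trichotomy t d with hlt | heq | hgt
  · have htm : t ∈ Set.Icc c d := ⟨ht.1, hlt.le⟩
    have h1 : HasDerivWithinAt z (v t (z t)) (Set.Icc c d) t := by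
      have := (hu t htm).congr hz1 (hz1 htm)
      rwa [← hz1 htm] at this
    have h2 : HasDerivWithinAt z (v t (z t)) (Set.Icc c e ∩ Set.Iio d) t :=
      h1.mono fun p hp => ⟨hp.1.1, le_of_lt hp.2⟩
    exact (hasDerivWithinAt_inter (Iio_mem_nhds hlt)).mp h2
  · subst heq
    have h1 : HasDerivWithinAt z (v t (z t)) (Set.Icc c t) t := by
      have htm : t ∈ Set.Icc c t := ⟨ht.1, le_refl t⟩
      have := (hu t htm).congr hz1 (hz1 htm)
      rwa [← hz1 htm] at this
    have h2 : HasDerivWithinAt z (v t (z t)) (Set.Icc t e) t := by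
      have htm : t ∈ Set.Icc t e := ⟨le_refl t, ht.2⟩
      have := (hw t htm).congr hz2 (hz2 htm)
      rwa [← hz2 htm] at this
    have := h1.union h2
    rwa [Set.Icc_union_Icc_eq_Icc hcd hde] at this
  · have htm : t ∈ Set.Icc d e := ⟨hgt.le, ht.2⟩
    have h1 : HasDerivWithinAt z (v t (z t)) (Set.Icc d e) t := by
      have := (hw t htm).congr hz2 (hz2 htm)
      rwa [← hz2 htm] at this
    have h2 : HasDerivWithinAt z (v t (z t)) (Set.Icc c e ∩ Set.Ioi d) t :=
      h1.mono fun p hp => ⟨le_of_lt hp.2, hp.1.2⟩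
    exact (hasDerivWithinAt_inter (Ioi_mem_nhds hgt)).mp h2

variable {m : ℕ}

lemma mulVec_norm_bound {A : Matrix (Fin m) (Fin m) ℂ} {M : ℝ}
    (hM : (∑ i, ∑ j, ‖A i j‖) ≤ M) (v : Fin m → ℂ) :
    ‖A.mulVec v‖ ≤ M * ‖v‖ := by
  have hM0 : 0 ≤ M := le_trans (by positivity) hM
  rw [pi_norm_le_iff_of_nonneg (by positivity)]
  intro i
  calc ‖A.mulVec v i‖ = ‖∑ j, A i j * v j‖ := by simp [Matrix.mulVec, dotProduct]
    _ ≤ ∑ j, ‖A i j * v j‖ := norm_sum_le _ _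
    _ = ∑ j, ‖A i j‖ * ‖v j‖ := by simp [norm_mul]
    _ ≤ ∑ j, ‖A i j‖ * ‖v‖ := by
        refine Finset.sum_le_sum fun j _ => ?_
        exact mul_le_mul_of_nonneg_left (norm_le_pi_norm v j) (norm_nonneg _)
    _ = (∑ j, ‖A i j‖) * ‖v‖ := by rw [Finset.sum_mul]
    _ ≤ M * ‖v‖ := by
        refine mul_le_mul_of_nonneg_right ?_ (norm_nonneg _)
        refine le_trans ?_ hM
        exact Finset.single_le_sum (f := fun i => ∑ j, ‖A i j‖)
          (fun i _ => by positivity) (Finset.mem_univ i)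

/-- Local existence for the linear ODE on a subinterval. -/
lemma local_sol {a b : ℝ} {A : ℝ → Matrix (Fin m) (Fin m) ℂ} {f : ℝ → Fin m → ℂ}
    {M F : ℝ} (hM0 : 0 ≤ M) (hF0 : 0 ≤ F)
    (hM : ∀ t ∈ Set.Icc a b, (∑ i, ∑ j, ‖A t i j‖) ≤ M)
    (hF : ∀ t ∈ Set.Icc a b, ‖f t‖ ≤ F)
    (hAc : ∀ i j, ContinuousOn (fun t => A t i j) (Set.Icc a b))
    (hfc : ∀ i, ContinuousOn (fun t => f t i) (Set.Icc a b))
    {c c' : ℝ} (hac : a ≤ c) (hcc' : c ≤ c') (hc'b : c' ≤ b)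
    (hlen : (c' - c) * (M + 1) ≤ 1 / 2) (x₀ : Fin m → ℂ) :
    ∃ z : ℝ → Fin m → ℂ, z c = x₀ ∧ ∀ t ∈ Set.Icc c c',
      HasDerivWithinAt z (f t - (A t).mulVec (z t)) (Set.Icc c c') t := by
  set δ := c' - c with hδ
  have hδ0 : 0 ≤ δ := by linarith
  set R : ℝ := 2 * δ * (F + M * ‖x₀‖) + 1 with hR
  set C : ℝ := F + M * (‖x₀‖ + R) with hC
  have hR0 : 0 ≤ R := by positivity
  have hC0 : 0 ≤ C := by positivity
  have hsub : Set.Icc c c' ⊆ Set.Icc a b := Set.Icc_subset_Icc hac hc'b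
  clear_value δ R C
  have hpl : IsPicardLindelof (fun t x => f t - (A t).mulVec x) (tmin := c) (tmax := c')
      ⟨c, ⟨le_refl c, hcc'⟩⟩ x₀ R.toNNReal 0 C.toNNReal M.toNNReal := by
    constructor
    · intro t ht
      apply LipschitzOnWith.of_dist_le_mul
      intro x _ y _
      rw [dist_eq_norm, dist_eq_norm]
      have : (f t - (A t).mulVec x) - (f t - (A t).mulVec y) = (A t).mulVec (y - x) := by
        rw [Matrix.mulVec_sub]
        abel
      rw [this]
      calc ‖(A t).mulVec (y - x)‖ ≤ M * ‖y - x‖ := mulVec_norm_bound (hM t (hsub ht)) _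
        _ = (M.toNNReal : ℝ) * ‖x - y‖ := by
            rw [Real.coe_toNNReal _ hM0, norm_sub_rev]
    · intro x _
      apply ContinuousOn.sub
      · rw [continuousOn_pi]
        intro i
        exact (hfc i).mono hsub
      · rw [continuousOn_pi]
        intro i
        have : ∀ t, (A t).mulVec x i = ∑ j, A t i j * x j := by
          intro t; simp [Matrix.mulVec, dotProduct]
        simp only [this]
        apply continuousOn_finset_sum
        intro j _
        exact ((hAc i j).mono hsub).mul continuousOn_const
    · intro t ht x hx
      rw [Real.coe_toNNReal _ hC0]
      rw [Real.coe_toNNReal _ hR0] at hx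
      have hxn : ‖x‖ ≤ ‖x₀‖ + R := by
        calc ‖x‖ = ‖x₀ + (x - x₀)‖ := by congr 1; abel
          _ ≤ ‖x₀‖ + ‖x - x₀‖ := norm_add_le _ _
          _ ≤ ‖x₀‖ + R := by
              have := Metric.mem_closedBall.mp hx
              rw [dist_eq_norm] at this
              linarith
      calc ‖f t - (A t).mulVec x‖ ≤ ‖f t‖ + ‖(A t).mulVec x‖ := norm_sub_le _ _
        _ ≤ F + M * ‖x‖ := add_le_add (hF t (hsub ht)) (mulVec_norm_bound (hM t (hsub ht)) x)
        _ ≤ F + M * (‖x₀‖ + R) :=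
            add_le_add_right (mul_le_mul_of_nonneg_left hxn hM0) F
        _ = C := hC.symm
    · have hmax : max (c' - c) (c - c) = δ := by
        rw [hδ, sub_self]; exact max_eq_left (by linarith)
      rw [Real.coe_toNNReal _ hC0, Real.coe_toNNReal _ hR0, NNReal.coe_zero, sub_zero]
      show C * max (c' - c) (c - c) ≤ R
      rw [hmax]
      have h1 : M * δ ≤ 1 / 2 := by nlinarith
      have h2 : δ * (F + M * ‖x₀‖) ≤ R / 2 := by
        have : 0 ≤ δ * (F + M * ‖x₀‖) := by positivity
        rw [hR]; linarith
      have h3 : M * δ * R ≤ 1 / 2 * R := mul_le_mul_of_nonneg_right h1 hR0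
      have h4 : C * δ = δ * (F + M * ‖x₀‖) + M * δ * R := by rw [hC]; ring
      linarith
  obtain ⟨z, hz0, hz⟩ := hpl.exists_eq_forall_mem_Icc_hasDerivWithinAt₀
  exact ⟨z, hz0, hz⟩

end ode

section globalode
variable {m : ℕ}

lemma hasDerivWithinAt_singleton'' {E : Type*} [NormedAddCommGroup E] [NormedSpace ℝ E]
    (f : ℝ → E) (x : ℝ) (v : E) : HasDerivWithinAt f v {x} x := by
  have : HasFDerivWithinAt f (ContinuousLinearMap.smulRight (1 : ℝ →L[ℝ] ℝ) v) {x} x := by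
    simp only [HasFDerivWithinAt, nhdsWithin_singleton, hasFDerivAtFilter_iff_isLittleO,
      Filter.prod_pure_pure, Asymptotics.isLittleO_pure, sub_self, map_zero]
  exact this

lemma global_sol {a b : ℝ} (hab : a < b) {A : ℝ → Matrix (Fin m) (Fin m) ℂ}
    {f : ℝ → Fin m → ℂ}
    (hAc : ∀ i j, ContinuousOn (fun t => A t i j) (Set.Icc a b))
    (hfc : ∀ i, ContinuousOn (fun t => f t i) (Set.Icc a b)) :
    ∃ y : ℝ → Fin m → ℂ, ∀ t ∈ Set.Icc a b,
      HasDerivWithinAt y (f t - (A t).mulVec (y t)) (Set.Icc a b) t := by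
  -- bounds
  have hφ : ContinuousOn (fun t => ∑ i, ∑ j, ‖A t i j‖) (Set.Icc a b) := by
    apply continuousOn_finset_sum
    intro i _
    apply continuousOn_finset_sum
    intro j _
    exact (hAc i j).norm
  obtain ⟨M₁, hM₁⟩ := isCompact_Icc.exists_bound_of_continuousOn hφ
  have hfq : ContinuousOn f (Set.Icc a b) := continuousOn_pi.mpr hfc
  obtain ⟨F₁, hF₁⟩ := isCompact_Icc.exists_bound_of_continuousOn hfq.norm
  set M : ℝ := max M₁ 0 with hMdef
  set F : ℝ := max F₁ 0 with hFdef
  have hM0 : 0 ≤ M := le_max_right _ _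
  have hF0 : 0 ≤ F := le_max_right _ _
  have hM : ∀ t ∈ Set.Icc a b, (∑ i, ∑ j, ‖A t i j‖) ≤ M := by
    intro t ht
    calc (∑ i, ∑ j, ‖A t i j‖) = ‖∑ i, ∑ j, ‖A t i j‖‖ := by
          rw [Real.norm_eq_abs, abs_of_nonneg (by positivity)]
      _ ≤ M₁ := hM₁ t ht
      _ ≤ M := le_max_left _ _
  have hF : ∀ t ∈ Set.Icc a b, ‖f t‖ ≤ F := by
    intro t ht
    calc ‖f t‖ = ‖‖f t‖‖ := by rw [norm_norm]
      _ ≤ F₁ := hF₁ t ht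
      _ ≤ F := le_max_left _ _
  set δ : ℝ := 1 / (2 * (M + 1)) with hδdef
  have hδ0 : 0 < δ := by positivity
  have hkey : ∀ c c' : ℝ, c' - c ≤ δ → (c' - c) * (M + 1) ≤ 1 / 2 := by
    intro c c' h
    have h1 : 0 < M + 1 := by linarith
    calc (c' - c) * (M + 1) ≤ δ * (M + 1) := mul_le_mul_of_nonneg_right h h1.le
      _ = 1 / 2 := by rw [hδdef]; field_simp
  -- inductive construction
  have main : ∀ k : ℕ, ∃ y : ℝ → Fin m → ℂ, ∀ t ∈ Set.Icc a (min (a + k * δ) b),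
      HasDerivWithinAt y (f t - (A t).mulVec (y t)) (Set.Icc a (min (a + k * δ) b)) t := by
    intro k
    induction k with
    | zero =>
      refine ⟨fun _ => 0, ?_⟩
      have h0 : min (a + (0 : ℕ) * δ) b = a := by
        simp only [Nat.cast_zero, zero_mul, add_zero]
        exact min_eq_left hab.le
      rw [h0, Set.Icc_self]
      intro t ht
      rw [Set.mem_singleton_iff] at ht
      subst ht
      exact hasDerivWithinAt_singleton'' _ _ _
    | succ k IH =>
      obtain ⟨y, hy⟩ := IH
      by_cases hcb : a + k * δ < b
      · set c : ℝ := a + k * δ with hcdef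
        set c' : ℝ := min (a + (k + 1 : ℕ) * δ) b with hc'def
        have hminc : min (a + (k : ℕ) * δ) b = c := min_eq_left hcb.le
        have hac : a ≤ c := by
          rw [hcdef]
          have : (0:ℝ) ≤ k * δ := by positivity
          linarith
        have hcc' : c ≤ c' := by
          apply le_min _ hcb.le
          rw [hcdef]
          push_cast
          nlinarith
        have hc'b : c' ≤ b := min_le_right _ _
        have hlen : (c' - c) * (M + 1) ≤ 1 / 2 := by
          apply hkey
          have : c' ≤ a + (k + 1 : ℕ) * δ := min_le_left _ _
          rw [hcdef]
          push_cast at this ⊢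
          nlinarith
        obtain ⟨z, hz0, hz⟩ := local_sol hM0 hF0 hM hF hAc hfc hac hcc' hc'b hlen (y c)
        rw [hminc] at hy
        have hglue := glue_sol (v := fun t x => f t - (A t).mulVec x) hac hcc' hy hz hz0.symm
        exact ⟨_, fun t ht => hglue t ht⟩
      · push_neg at hcb
        have h1 : min (a + (k + 1 : ℕ) * δ) b = min (a + (k : ℕ) * δ) b := by
          rw [min_eq_right hcb, min_eq_right]
          refine le_trans hcb ?_
          push_cast
          nlinarith [hδ0.le]
        rw [h1]
        exact ⟨y, hy⟩
  obtain ⟨k, hk⟩ := exists_nat_ge ((b - a) / δ)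
  obtain ⟨y, hy⟩ := main k
  have : min (a + k * δ) b = b := by
    apply min_eq_right
    rw [div_le_iff₀ hδ0] at hk
    linarith
  rw [this] at hy
  exact ⟨y, hy⟩

end globalode

/-- Lemma 3.2: if `A ∈ (C^{n,α})^{m×m}` and a differentiable `y` solves
`y' + A y = f` on `[a,b]` with `f ∈ (C^{n,α})^m`, then `y ∈ (C^{n+1,α})^m`; moreover, as `f`
runs through `(C^{n,α})^m`, the solutions run through the whole space `(C^{n+1,α})^m`. -/
theorem statement0 (a b : ℝ) (hab : a < b) (n m : ℕ) (hm : 1 ≤ m)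
    (α : ℝ) (hα0 : 0 ≤ α) (hα1 : α ≤ 1)
    (A : ℝ → Matrix (Fin m) (Fin m) ℂ) (hA : InHolderM a b n α A) :
    (∀ f y : ℝ → Fin m → ℂ, InHolderV a b n α f →
      (∀ i, DifferentiableOn ℝ (fun t => y t i) (Set.Icc a b)) →
      SolvesV a b A y f → InHolderV a b (n + 1) α y) ∧
    (∀ f : ℝ → Fin m → ℂ, InHolderV a b n α f →
      ∃ y : ℝ → Fin m → ℂ, InHolderV a b (n + 1) α y ∧ SolvesV a b A y f) ∧
    (∀ y : ℝ → Fin m → ℂ, InHolderV a b (n + 1) α y →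
      ∃ f : ℝ → Fin m → ℂ, InHolderV a b n α f ∧ SolvesV a b A y f) := by
  have udo : UniqueDiffOn ℝ (Set.Icc a b) := uniqueDiffOn_Icc hab
  have mulVec_eq : ∀ (t : ℝ) (y : ℝ → Fin m → ℂ) (i : Fin m),
      (A t).mulVec (y t) i = ∑ j, A t i j * y t j := by
    intro t y i; simp [Matrix.mulVec, dotProduct]
  refine ⟨?_, ?_, ?_⟩
  · intro f y hf hdiff hsol
    apply regularity hab hα0 hα1 hA hf hdiff
    intro t ht i
    have h3 := hsol t ht i
    simp only [Lop] at h3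
    rw [← mulVec_eq t y i]
    exact eq_sub_of_add_eq h3
  · intro f hf
    have hAc : ∀ i j, ContinuousOn (fun t => A t i j) (Set.Icc a b) :=
      fun i j => (hA i j).1.continuousOn
    have hfc : ∀ i, ContinuousOn (fun t => f t i) (Set.Icc a b) :=
      fun i => (hf i).1.continuousOn
    obtain ⟨y, hy⟩ := global_sol hab hAc hfc
    have hcomp : ∀ t ∈ Set.Icc a b, ∀ i, HasDerivWithinAt (fun s => y s i)
        (f t i - (A t).mulVec (y t) i) (Set.Icc a b) t := by
      intro t ht i
      exact (hasDerivWithinAt_pi.mp (hy t ht)) i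
    have hdiff : ∀ i, DifferentiableOn ℝ (fun t => y t i) (Set.Icc a b) :=
      fun i t ht => (hcomp t ht i).differentiableWithinAt
    have hder : ∀ t ∈ Set.Icc a b, ∀ i, derivWithin (fun s => y s i) (Set.Icc a b) t
        = f t i - (A t).mulVec (y t) i :=
      fun t ht i => (hcomp t ht i).derivWithin (udo t ht)
    have hsolves : SolvesV a b A y f := by
      intro t ht i
      simp only [Lop, hder t ht i]
      ring
    refine ⟨y, ?_, hsolves⟩
    apply regularity hab hα0 hα1 hA hf hdiff
    intro t ht i
    rw [hder t ht i, mulVec_eq]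
  · intro y hy
    exact ⟨Lop a b A y, lop_inHolder hab hα0 hα1 hA hy, fun t ht i => rfl⟩
end

section
/- Fix t₀ ∈ [a,b] and let A ∈ (C^{n,α})^{m×m}. Define the integral operator V_A by (V_A Y)(t) := ∫_{t₀}^{t} A(s)Y(s) ds for Y ∈ (C^{n+1,α})^{m×m} and t ∈ [a,b]. Then V_A is a compact linear operator on (C^{n+1,α})^{m×m}, and there is a positive constant κ, independent of A, such that its operator norm satisfies ‖V_A‖ ≤ κ ‖A‖_{n,α}. -/
open Set Filter Topology

/-- The integral operator `V_A`: `(V_A Y)(t) = ∫_{t₀}^t A(s)Y(s) ds` (entrywise integrals). -/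
noncomputable def Vop (t₀ : ℝ) {m : ℕ} (A Y : ℝ → Matrix (Fin m) (Fin m) ℂ) :
    ℝ → Matrix (Fin m) (Fin m) ℂ :=
  fun t => Matrix.of fun i j => ∫ s in t₀..t, (A s * Y s) i j

section helpers
variable {a b α : ℝ} {g g' : ℝ → ℂ}

lemma supIcc_nonneg (a b : ℝ) (g : ℝ → ℂ) : 0 ≤ supIcc a b g := by
  apply Real.sSup_nonneg
  rintro r ⟨t, -, rfl⟩
  positivity

lemma le_supIcc (hg : ContinuousOn g (Set.Icc a b)) {t : ℝ} (ht : t ∈ Set.Icc a b) :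
    ‖g t‖ ≤ supIcc a b g :=
  le_csSup (isCompact_Icc.bddAbove_image hg.norm) ⟨t, ht, rfl⟩

lemma supIcc_le {M : ℝ} (hM : 0 ≤ M) (h : ∀ t ∈ Set.Icc a b, ‖g t‖ ≤ M) :
    supIcc a b g ≤ M := by
  apply Real.sSup_le _ hM
  rintro r ⟨t, ht, rfl⟩
  exact h t ht

lemma supIcc_congr (h : Set.EqOn g g' (Set.Icc a b)) : supIcc a b g = supIcc a b g' := by
  unfold supIcc
  congr 1
  exact Set.image_congr fun t ht => by rw [h ht]

lemma holderSemi_nonneg (a b α : ℝ) (g : ℝ → ℂ) : 0 ≤ holderSemi a b α g := by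
  apply Real.sSup_nonneg
  rintro r ⟨s, -, t, -, -, rfl⟩
  positivity

lemma holderSemi_le {K : ℝ} (hK : 0 ≤ K)
    (h : ∀ s ∈ Set.Icc a b, ∀ t ∈ Set.Icc a b, ‖g s - g t‖ ≤ K * |s - t| ^ α) :
    holderSemi a b α g ≤ K := by
  apply Real.sSup_le _ hK
  rintro r ⟨s, hs, t, ht, hst, rfl⟩
  have hd : (0:ℝ) < |s - t| ^ α :=
    Real.rpow_pos_of_pos (abs_pos.2 (sub_ne_zero.2 hst)) α
  rw [div_le_iff₀ hd]
  exact h s hs t ht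

lemma holderSemi_congr (h : Set.EqOn g g' (Set.Icc a b)) :
    holderSemi a b α g = holderSemi a b α g' := by
  unfold holderSemi
  congr 1
  ext r
  constructor
  · rintro ⟨s, hs, t, ht, hst, rfl⟩; exact ⟨s, hs, t, ht, hst, by rw [h hs, h ht]⟩
  · rintro ⟨s, hs, t, ht, hst, rfl⟩; exact ⟨s, hs, t, ht, hst, by rw [h hs, h ht]⟩

lemma holderSemi_spec {K : ℝ}
    (h : ∀ s ∈ Set.Icc a b, ∀ t ∈ Set.Icc a b, ‖g s - g t‖ ≤ K * |s - t| ^ α) :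
    ∀ s ∈ Set.Icc a b, ∀ t ∈ Set.Icc a b,
      ‖g s - g t‖ ≤ holderSemi a b α g * |s - t| ^ α := by
  intro s hs t ht
  rcases eq_or_ne s t with rfl | hst
  · simp only [sub_self, norm_zero]
    exact mul_nonneg (holderSemi_nonneg _ _ _ _) (Real.rpow_nonneg (abs_nonneg _) _)
  · have hd : (0:ℝ) < |s - t| ^ α :=
      Real.rpow_pos_of_pos (abs_pos.2 (sub_ne_zero.2 hst)) α
    have hbdd : BddAbove {r : ℝ | ∃ s ∈ Set.Icc a b, ∃ t ∈ Set.Icc a b,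
        s ≠ t ∧ r = ‖g s - g t‖ / |s - t| ^ α} := by
      refine ⟨max K 0, ?_⟩
      rintro r ⟨s', hs', t', ht', hst', rfl⟩
      have hd' : (0:ℝ) < |s' - t'| ^ α :=
        Real.rpow_pos_of_pos (abs_pos.2 (sub_ne_zero.2 hst')) α
      exact le_max_of_le_left ((div_le_iff₀ hd').2 (h s' hs' t' ht'))
    have hmem : ‖g s - g t‖ / |s - t| ^ α ∈ {r : ℝ | ∃ s ∈ Set.Icc a b, ∃ t ∈ Set.Icc a b,
        s ≠ t ∧ r = ‖g s - g t‖ / |s - t| ^ α} := ⟨s, hs, t, ht, hst, rfl⟩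
    have := le_csSup hbdd hmem
    calc ‖g s - g t‖ = ‖g s - g t‖ / |s - t| ^ α * |s - t| ^ α := by
          field_simp
      _ ≤ holderSemi a b α g * |s - t| ^ α := by
          apply mul_le_mul_of_nonneg_right this hd.le

end helpers

section calculus
variable {a b : ℝ}

lemma lipBound (hab : a < b) {N : ℕ} {f : ℝ → ℂ} (hf : ContDiffOn ℝ N f (Set.Icc a b))
    {l : ℕ} (hl : l < N) :
    ∀ s ∈ Set.Icc a b, ∀ t ∈ Set.Icc a b,
      ‖iteratedDerivWithin l f (Set.Icc a b) s - iteratedDerivWithin l f (Set.Icc a b) t‖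
        ≤ supIcc a b (iteratedDerivWithin (l + 1) f (Set.Icc a b)) * |s - t| := by
  intro s hs t ht
  have hS : UniqueDiffOn ℝ (Set.Icc a b) := uniqueDiffOn_Icc hab
  have hdiff := hf.differentiableOn_iteratedDerivWithin (by exact_mod_cast hl) hS
  have hcont := hf.continuousOn_iteratedDerivWithin (by exact_mod_cast hl) hS
  have hder : ∀ x ∈ Set.Icc a b, HasDerivWithinAt (iteratedDerivWithin l f (Set.Icc a b))
      (iteratedDerivWithin (l + 1) f (Set.Icc a b) x) (Set.Icc a b) x := by
    intro x hx
    have := (hdiff x hx).hasDerivWithinAt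
    rwa [← iteratedDerivWithin_succ] at this
  have hbound : ∀ x ∈ Set.Icc a b,
      ‖iteratedDerivWithin (l + 1) f (Set.Icc a b) x‖
        ≤ supIcc a b (iteratedDerivWithin (l + 1) f (Set.Icc a b)) := by
    intro x hx
    exact le_supIcc (hf.continuousOn_iteratedDerivWithin (by exact_mod_cast hl) hS) hx
  have := Convex.norm_image_sub_le_of_norm_hasDerivWithin_le hder hbound (convex_Icc a b) ht hs
  simpa [Real.norm_eq_abs] using this

lemma iterDeriv_sum (hab : a < b) {N : ℕ} {ι : Type*} (u : Finset ι) (f : ι → ℝ → ℂ)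
    (hf : ∀ k ∈ u, ContDiffOn ℝ N (f k) (Set.Icc a b)) {l : ℕ} (hl : l ≤ N) :
    ∀ t ∈ Set.Icc a b, iteratedDerivWithin l (fun x => ∑ k ∈ u, f k x) (Set.Icc a b) t
      = ∑ k ∈ u, iteratedDerivWithin l (f k) (Set.Icc a b) t := by
  have hS : UniqueDiffOn ℝ (Set.Icc a b) := uniqueDiffOn_Icc hab
  classical
  induction u using Finset.cons_induction with
  | empty =>
    intro t ht
    have : iteratedDerivWithin l (fun _ : ℝ => (0:ℂ)) (Set.Icc a b) t = 0 := by
      have := iteratedDerivWithin_const_smul (R := ℂ) (F := ℂ) ht hS (0:ℂ)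
        (contDiffOn_const (c := (0:ℂ)) (n := (l : WithTop ℕ∞)) t ht)
      simpa using this
    simpa using this
  | cons k u hk IH =>
    intro t ht
    have h1 : ContDiffOn ℝ l (f k) (Set.Icc a b) :=
      (hf k (Finset.mem_cons_self k u)).of_le (by exact_mod_cast hl)
    have h2 : ContDiffOn ℝ l (fun x => ∑ j ∈ u, f j x) (Set.Icc a b) :=
      (ContDiffOn.sum fun j hj => ((hf j (Finset.mem_cons_of_mem hj)).of_le
        (by exact_mod_cast hl) : ContDiffOn ℝ l (f j) (Set.Icc a b)))
    have : iteratedDerivWithin l (fun x => f k x + ∑ j ∈ u, f j x) (Set.Icc a b) t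
        = iteratedDerivWithin l (f k) (Set.Icc a b) t
          + iteratedDerivWithin l (fun x => ∑ j ∈ u, f j x) (Set.Icc a b) t :=
      iteratedDerivWithin_add ht hS (h1 t ht) (h2 t ht)
    simp only [Finset.sum_cons]
    rw [this, IH (fun j hj => hf j (Finset.mem_cons_of_mem hj)) t ht]

lemma leibniz (hab : a < b) {N : ℕ} {f g : ℝ → ℂ}
    (hf : ContDiffOn ℝ N f (Set.Icc a b)) (hg : ContDiffOn ℝ N g (Set.Icc a b))
    {l : ℕ} (hl : l ≤ N) :
    ∀ t ∈ Set.Icc a b, iteratedDerivWithin l (fun u => f u * g u) (Set.Icc a b) t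
      = ∑ i ∈ Finset.range (l + 1), (l.choose i : ℂ)
          * iteratedDerivWithin i f (Set.Icc a b) t
          * iteratedDerivWithin (l - i) g (Set.Icc a b) t := by
  have hS : UniqueDiffOn ℝ (Set.Icc a b) := uniqueDiffOn_Icc hab
  induction l with
  | zero => intro t ht; simp
  | succ l IH =>
    intro t ht
    have hl' : l ≤ N := le_trans (Nat.le_succ l) hl
    have hEq : Set.EqOn (iteratedDerivWithin l (fun u => f u * g u) (Set.Icc a b))
        (fun t => ∑ i ∈ Finset.range (l + 1), (l.choose i : ℂ)
          * iteratedDerivWithin i f (Set.Icc a b) t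
          * iteratedDerivWithin (l - i) g (Set.Icc a b) t) (Set.Icc a b) :=
      fun x hx => IH hl' x hx
    have hdf : ∀ i, i ≤ l → ∀ x ∈ Set.Icc a b,
        DifferentiableWithinAt ℝ (iteratedDerivWithin i f (Set.Icc a b)) (Set.Icc a b) x := by
      intro i hi x hx
      exact hf.differentiableOn_iteratedDerivWithin
        (by exact_mod_cast lt_of_lt_of_le (Nat.lt_succ_of_le hi) hl) hS x hx
    have hdg : ∀ i, i ≤ l → ∀ x ∈ Set.Icc a b,
        DifferentiableWithinAt ℝ (iteratedDerivWithin i g (Set.Icc a b)) (Set.Icc a b) x := by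
      intro i hi x hx
      exact hg.differentiableOn_iteratedDerivWithin
        (by exact_mod_cast lt_of_lt_of_le (Nat.lt_succ_of_le hi) hl) hS x hx
    have hu := hS.uniqueDiffWithinAt ht
    rw [iteratedDerivWithin_succ, derivWithin_congr hEq (hEq ht)]
    rw [derivWithin_fun_sum (fun i hi => by
      exact (((differentiableWithinAt_const _).mul
        (hdf i (Nat.lt_succ_iff.1 (Finset.mem_range.1 hi)) t ht)).mul
        (hdg (l - i) (Nat.sub_le l i) t ht)))]
    have hterm : ∀ i ∈ Finset.range (l + 1),
        derivWithin (fun x => (l.choose i : ℂ)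
            * iteratedDerivWithin i f (Set.Icc a b) x
            * iteratedDerivWithin (l - i) g (Set.Icc a b) x) (Set.Icc a b) t
        = (l.choose i : ℂ) * (iteratedDerivWithin (i+1) f (Set.Icc a b) t
              * iteratedDerivWithin (l - i) g (Set.Icc a b) t
            + iteratedDerivWithin i f (Set.Icc a b) t
              * iteratedDerivWithin (l - i + 1) g (Set.Icc a b) t) := by
      intro i hi
      have hi' : i ≤ l := Nat.lt_succ_iff.1 (Finset.mem_range.1 hi)
      have d1 := hdf i hi' t ht
      have d2 := hdg (l - i) (Nat.sub_le l i) t ht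
      rw [show (fun x => (l.choose i : ℂ) * iteratedDerivWithin i f (Set.Icc a b) x
            * iteratedDerivWithin (l - i) g (Set.Icc a b) x)
          = (fun x => (l.choose i : ℂ) * (iteratedDerivWithin i f (Set.Icc a b) x
            * iteratedDerivWithin (l - i) g (Set.Icc a b) x)) by funext x; ring]
      rw [derivWithin_const_mul _ (d1.fun_mul d2), derivWithin_fun_mul d1 d2,
        ← iteratedDerivWithin_succ, ← iteratedDerivWithin_succ]
    rw [Finset.sum_congr rfl hterm]
    have key := Finset.sum_choose_succ_mul (R := ℂ)
      (fun i j => iteratedDerivWithin i f (Set.Icc a b) t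
        * iteratedDerivWithin j g (Set.Icc a b) t) l
    have hsub : ∀ i ∈ Finset.range (l + 1), l + 1 - i = (l - i) + 1 := by
      intro i hi
      have : i ≤ l := Nat.lt_succ_iff.1 (Finset.mem_range.1 hi)
      omega
    calc ∑ i ∈ Finset.range (l + 1), (l.choose i : ℂ)
          * (iteratedDerivWithin (i+1) f (Set.Icc a b) t
              * iteratedDerivWithin (l - i) g (Set.Icc a b) t
            + iteratedDerivWithin i f (Set.Icc a b) t
              * iteratedDerivWithin (l - i + 1) g (Set.Icc a b) t)
        = (∑ i ∈ Finset.range (l + 1), (l.choose i : ℂ)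
            * (iteratedDerivWithin i f (Set.Icc a b) t
              * iteratedDerivWithin (l + 1 - i) g (Set.Icc a b) t))
          + ∑ i ∈ Finset.range (l + 1), (l.choose i : ℂ)
            * (iteratedDerivWithin (i+1) f (Set.Icc a b) t
              * iteratedDerivWithin (l - i) g (Set.Icc a b) t) := by
          rw [← Finset.sum_add_distrib]
          refine Finset.sum_congr rfl fun i hi => ?_
          rw [hsub i hi]; ring
      _ = ∑ i ∈ Finset.range (l + 2), ((l+1).choose i : ℂ)
            * (iteratedDerivWithin i f (Set.Icc a b) t
              * iteratedDerivWithin (l + 1 - i) g (Set.Icc a b) t) := key.symm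
      _ = ∑ i ∈ Finset.range (l + 1 + 1), ((l+1).choose i : ℂ)
            * iteratedDerivWithin i f (Set.Icc a b) t
            * iteratedDerivWithin (l + 1 - i) g (Set.Icc a b) t := by
          refine Finset.sum_congr rfl fun i hi => ?_
          ring

end calculus

section ftc
variable {a b t₀ : ℝ}

lemma ftc_within (hab : a ≤ b) (ht₀ : t₀ ∈ Set.Icc a b) {f : ℝ → ℂ}
    (hf : ContinuousOn f (Set.Icc a b)) :
    ∀ t ∈ Set.Icc a b,
      HasDerivWithinAt (fun u => ∫ s in t₀..u, f s) (f t) (Set.Icc a b) t := by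
  intro t ht
  set f' : ℝ → ℂ := fun u => f ((Set.projIcc a b hab u : ℝ)) with hf'
  have hcont : Continuous f' := by
    apply hf.comp_continuous (continuous_subtype_val.comp (continuous_projIcc))
    intro x
    exact (Set.projIcc a b hab x).2
  have heq : Set.EqOn f' f (Set.Icc a b) := fun x hx => by
    simp [hf', Set.projIcc_of_mem hab hx]
  have hA : HasDerivAt (fun u => ∫ s in t₀..u, f' s) (f' t) t :=
    intervalIntegral.integral_hasDerivAt_right (hcont.intervalIntegrable _ _)
      (hcont.stronglyMeasurableAtFilter _ _) hcont.continuousAt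
  have hint : ∀ u ∈ Set.Icc a b, (∫ s in t₀..u, f' s) = ∫ s in t₀..u, f s := by
    intro u hu
    apply intervalIntegral.integral_congr
    intro x hx
    exact heq ((Set.uIcc_subset_Icc ht₀ hu) hx)
  have := hA.hasDerivWithinAt (s := Set.Icc a b)
  rw [heq ht] at this
  exact this.congr (fun x hx => (hint x hx).symm) ((hint t ht).symm)

lemma antideriv (hab : a < b) (ht₀ : t₀ ∈ Set.Icc a b) {N : ℕ} {f : ℝ → ℂ}
    (hf : ContDiffOn ℝ N f (Set.Icc a b)) :
    ContDiffOn ℝ (N + 1) (fun u => ∫ s in t₀..u, f s) (Set.Icc a b) ∧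
    ∀ j : ℕ, Set.EqOn
      (iteratedDerivWithin (j + 1) (fun u => ∫ s in t₀..u, f s) (Set.Icc a b))
      (iteratedDerivWithin j f (Set.Icc a b)) (Set.Icc a b) := by
  have hS : UniqueDiffOn ℝ (Set.Icc a b) := uniqueDiffOn_Icc hab
  have hder := ftc_within hab.le ht₀ hf.continuousOn
  have hdiff : DifferentiableOn ℝ (fun u => ∫ s in t₀..u, f s) (Set.Icc a b) :=
    fun t ht => (hder t ht).differentiableWithinAt
  have hdw : Set.EqOn (derivWithin (fun u => ∫ s in t₀..u, f s) (Set.Icc a b)) f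
      (Set.Icc a b) := fun t ht => (hder t ht).derivWithin (hS.uniqueDiffWithinAt ht)
  constructor
  · rw [contDiffOn_succ_iff_derivWithin hS]
    refine ⟨hdiff, ?_, hf.congr fun t ht => hdw ht⟩
    intro h
    exact absurd h (by simp)
  · intro j t ht
    rw [iteratedDerivWithin_succ']
    exact iteratedDerivWithin_congr hdw ht

end ftc

section normfacts
variable {a b α : ℝ} {l i : ℕ} {x : ℝ → ℂ}

lemma cNorm_nonneg (a b : ℝ) (l : ℕ) (x : ℝ → ℂ) : 0 ≤ cNorm a b l x :=
  Finset.sum_nonneg fun j _ => supIcc_nonneg a b _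

lemma holderNorm_nonneg (a b : ℝ) (l : ℕ) (α : ℝ) (x : ℝ → ℂ) :
    0 ≤ holderNorm a b l α x := by
  unfold holderNorm
  have h1 := cNorm_nonneg a b l x
  split <;> [simpa; exact add_nonneg h1 (holderSemi_nonneg _ _ _ _)]

lemma holderNormM_nonneg (a b : ℝ) (l : ℕ) (α : ℝ) {m : ℕ}
    (A : ℝ → Matrix (Fin m) (Fin m) ℂ) : 0 ≤ holderNormM a b l α A :=
  Finset.sum_nonneg fun _ _ => Finset.sum_nonneg fun _ _ => holderNorm_nonneg _ _ _ _ _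

lemma supIcc_le_cNorm (hi : i ≤ l) :
    supIcc a b (iteratedDerivWithin i x (Set.Icc a b)) ≤ cNorm a b l x :=
  Finset.single_le_sum (f := fun j => supIcc a b (iteratedDerivWithin j x (Set.Icc a b)))
    (fun j _ => supIcc_nonneg a b _) (Finset.mem_range.2 (Nat.lt_succ_of_le hi))

lemma cNorm_le_holderNorm : cNorm a b l x ≤ holderNorm a b l α x := by
  unfold holderNorm
  have : (0:ℝ) ≤ (if α = 0 then 0 else holderSemi a b α (iteratedDerivWithin l x (Set.Icc a b))) := by
    split
    · exact le_refl 0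
    · exact holderSemi_nonneg _ _ _ _
  linarith

lemma iter_le_holderNorm (hab : a < b) (hx : ContDiffOn ℝ l x (Set.Icc a b)) (hi : i ≤ l) :
    ∀ t ∈ Set.Icc a b, ‖iteratedDerivWithin i x (Set.Icc a b) t‖ ≤ holderNorm a b l α x := by
  intro t ht
  refine le_trans (le_supIcc (hx.continuousOn_iteratedDerivWithin (by exact_mod_cast hi)
    (uniqueDiffOn_Icc hab)) ht) (le_trans (supIcc_le_cNorm hi) cNorm_le_holderNorm)

lemma holderSemi_le_holderNorm (hα : α ≠ 0) :
    holderSemi a b α (iteratedDerivWithin l x (Set.Icc a b)) ≤ holderNorm a b l α x := by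
  unfold holderNorm
  rw [if_neg hα]
  linarith [cNorm_nonneg a b l x]

lemma holderStep (hab : a < b) (hα1 : α ≤ 1) {s t : ℝ}
    (hs : s ∈ Set.Icc a b) (ht : t ∈ Set.Icc a b) :
    |s - t| ≤ (b - a) ^ (1 - α) * |s - t| ^ α := by
  rcases eq_or_ne s t with rfl | hst
  · simp only [sub_self, abs_zero]
    have h1 : (0:ℝ) ≤ (b - a) ^ (1 - α) := Real.rpow_nonneg (by linarith) _
    have h2 : (0:ℝ) ≤ |(0:ℝ)| ^ α := Real.rpow_nonneg (abs_nonneg _) _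
    simpa using mul_nonneg h1 h2
  · have hd : (0:ℝ) < |s - t| := abs_pos.2 (sub_ne_zero.2 hst)
    have hdle : |s - t| ≤ b - a := by
      rw [abs_le]; constructor <;> [linarith [hs.1, ht.2]; linarith [hs.2, ht.1]]
    calc |s - t| = |s - t| ^ ((1 - α) + α) := by
          rw [sub_add_cancel, Real.rpow_one]
      _ = |s - t| ^ (1 - α) * |s - t| ^ α := Real.rpow_add hd _ _
      _ ≤ (b - a) ^ (1 - α) * |s - t| ^ α := by
          apply mul_le_mul_of_nonneg_right
            (Real.rpow_le_rpow hd.le hdle (by linarith))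
            (Real.rpow_nonneg (abs_nonneg _) _)

end normfacts

section prodest
variable {a b α : ℝ} {n : ℕ}

lemma prodEst (hab : a < b) (hα1 : α ≤ 1) {f g : ℝ → ℂ}
    (hf : InHolder a b n α f) (hg : InHolder a b (n + 1) α g) :
    ContDiffOn ℝ n (fun u => f u * g u) (Set.Icc a b) ∧
    (∀ l ≤ n, ∀ t ∈ Set.Icc a b,
      ‖iteratedDerivWithin l (fun u => f u * g u) (Set.Icc a b) t‖
        ≤ 2 ^ n * holderNorm a b n α f
            * ∑ l' ∈ Finset.range (n + 1), supIcc a b (iteratedDerivWithin l' g (Set.Icc a b))) ∧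
    (α ≠ 0 → ∀ s ∈ Set.Icc a b, ∀ t ∈ Set.Icc a b,
      ‖iteratedDerivWithin n (fun u => f u * g u) (Set.Icc a b) s
          - iteratedDerivWithin n (fun u => f u * g u) (Set.Icc a b) t‖
        ≤ 2 ^ (n + 1) * (1 + (b - a) ^ (1 - α)) * holderNorm a b n α f
            * (∑ l' ∈ Finset.range (n + 2), supIcc a b (iteratedDerivWithin l' g (Set.Icc a b)))
            * |s - t| ^ α) := by
  have hS : UniqueDiffOn ℝ (Set.Icc a b) := uniqueDiffOn_Icc hab
  set S := Set.Icc a b with hSdef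
  set Kf := holderNorm a b n α f with hKf
  set Qn := ∑ l' ∈ Finset.range (n + 1), supIcc a b (iteratedDerivWithin l' g S) with hQn
  set Qn1 := ∑ l' ∈ Finset.range (n + 2), supIcc a b (iteratedDerivWithin l' g S) with hQn1
  have hKf0 : 0 ≤ Kf := holderNorm_nonneg a b n α f
  have hQn0 : 0 ≤ Qn := Finset.sum_nonneg fun _ _ => supIcc_nonneg a b _
  have hQn10 : 0 ≤ Qn1 := Finset.sum_nonneg fun _ _ => supIcc_nonneg a b _
  have hgn : ContDiffOn ℝ n g S := hg.1.of_le (by exact_mod_cast Nat.le_succ n)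
  have hcd : ContDiffOn ℝ n (fun u => f u * g u) S := hf.1.mul hgn
  -- pointwise bounds
  have hMf : ∀ i ≤ n, ∀ t ∈ S, ‖iteratedDerivWithin i f S t‖ ≤ Kf :=
    fun i hi t ht => iter_le_holderNorm hab hf.1 hi t ht
  have hMgQ : ∀ i ≤ n + 1, supIcc a b (iteratedDerivWithin i g S) ≤ Qn1 :=
    fun i hi => Finset.single_le_sum
      (f := fun l' => supIcc a b (iteratedDerivWithin l' g S))
      (fun _ _ => supIcc_nonneg a b _) (Finset.mem_range.2 (Nat.lt_succ_of_le hi))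
  have hMgQn : ∀ i ≤ n, supIcc a b (iteratedDerivWithin i g S) ≤ Qn :=
    fun i hi => Finset.single_le_sum
      (f := fun l' => supIcc a b (iteratedDerivWithin l' g S))
      (fun _ _ => supIcc_nonneg a b _) (Finset.mem_range.2 (Nat.lt_succ_of_le hi))
  have hMg : ∀ i ≤ n + 1, ∀ t ∈ S, ‖iteratedDerivWithin i g S t‖ ≤ Qn1 := by
    intro i hi t ht
    exact le_trans (le_supIcc (hg.1.continuousOn_iteratedDerivWithin (by exact_mod_cast hi)
      hS) ht) (hMgQ i hi)
  have hMgn : ∀ i ≤ n, ∀ t ∈ S, ‖iteratedDerivWithin i g S t‖ ≤ Qn := by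
    intro i hi t ht
    exact le_trans (le_supIcc (hgn.continuousOn_iteratedDerivWithin (by exact_mod_cast hi)
      hS) ht) (hMgQn i hi)
  refine ⟨hcd, ?_, ?_⟩
  · -- sup bounds
    intro l hl t ht
    rw [leibniz hab hf.1 hgn hl t ht]
    calc ‖∑ i ∈ Finset.range (l + 1), (l.choose i : ℂ)
          * iteratedDerivWithin i f S t * iteratedDerivWithin (l - i) g S t‖
        ≤ ∑ i ∈ Finset.range (l + 1), ‖(l.choose i : ℂ)
          * iteratedDerivWithin i f S t * iteratedDerivWithin (l - i) g S t‖ :=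
          norm_sum_le _ _
      _ ≤ ∑ i ∈ Finset.range (l + 1), (l.choose i : ℝ) * (Kf * Qn) := by
          refine Finset.sum_le_sum fun i hi => ?_
          have hi' : i ≤ l := Nat.lt_succ_iff.1 (Finset.mem_range.1 hi)
          rw [norm_mul, norm_mul, Complex.norm_natCast, mul_assoc]
          refine mul_le_mul_of_nonneg_left ?_ (Nat.cast_nonneg _)
          exact mul_le_mul (hMf i (le_trans hi' hl) t ht)
            (hMgn (l - i) (le_trans (Nat.sub_le l i) hl) t ht) (norm_nonneg _) hKf0
      _ = (2 ^ l : ℝ) * (Kf * Qn) := by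
          rw [← Finset.sum_mul]
          norm_cast
          rw [Nat.sum_range_choose]
      _ ≤ 2 ^ n * Kf * Qn := by
          rw [← mul_assoc]
          apply mul_le_mul_of_nonneg_right _ hQn0
          apply mul_le_mul_of_nonneg_right _ hKf0
          exact pow_le_pow_right₀ one_le_two hl
  · -- Hölder bound
    intro hα' s hs t ht
    have hc₁0 : (0:ℝ) ≤ (b - a) ^ (1 - α) := Real.rpow_nonneg (by linarith) _
    have hc₁1 : (1:ℝ) ≤ 1 + (b - a) ^ (1 - α) := by linarith
    have hdα : (0:ℝ) ≤ |s - t| ^ α := Real.rpow_nonneg (abs_nonneg _) _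
    -- Hölder bound for the i-th derivative of f
    have hHf : ∀ i ≤ n, ‖iteratedDerivWithin i f S s - iteratedDerivWithin i f S t‖
        ≤ Kf * (1 + (b - a) ^ (1 - α)) * |s - t| ^ α := by
      intro i hi
      rcases lt_or_eq_of_le hi with hilt | rfl
      · calc ‖iteratedDerivWithin i f S s - iteratedDerivWithin i f S t‖
            ≤ supIcc a b (iteratedDerivWithin (i+1) f S) * |s - t| :=
              lipBound hab hf.1 hilt s hs t ht
          _ ≤ Kf * ((b - a) ^ (1 - α) * |s - t| ^ α) := by
              apply mul_le_mul
              · exact le_trans (supIcc_le_cNorm hilt) cNorm_le_holderNorm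
              · exact holderStep hab hα1 hs ht
              · exact abs_nonneg _
              · exact hKf0
          _ ≤ Kf * (1 + (b - a) ^ (1 - α)) * |s - t| ^ α := by
              rw [mul_assoc]
              apply mul_le_mul_of_nonneg_left _ hKf0
              apply mul_le_mul_of_nonneg_right _ hdα
              linarith
      · rcases hf.2 with h0 | ⟨K, hK⟩
        · exact absurd h0 hα'
        · calc ‖iteratedDerivWithin i f S s - iteratedDerivWithin i f S t‖
              ≤ holderSemi a b α (iteratedDerivWithin i f S) * |s - t| ^ α :=
                holderSemi_spec hK s hs t ht
            _ ≤ Kf * (1 + (b - a) ^ (1 - α)) * |s - t| ^ α := by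
                apply mul_le_mul_of_nonneg_right _ hdα
                calc holderSemi a b α (iteratedDerivWithin i f S)
                    ≤ Kf := holderSemi_le_holderNorm hα'
                  _ = Kf * 1 := (mul_one Kf).symm
                  _ ≤ Kf * (1 + (b - a) ^ (1 - α)) := by
                      apply mul_le_mul_of_nonneg_left hc₁1 hKf0
    -- Lipschitz bound for derivatives of g
    have hHg : ∀ i ≤ n, ‖iteratedDerivWithin i g S s - iteratedDerivWithin i g S t‖
        ≤ Qn1 * (1 + (b - a) ^ (1 - α)) * |s - t| ^ α := by
      intro i hi
      calc ‖iteratedDerivWithin i g S s - iteratedDerivWithin i g S t‖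
          ≤ supIcc a b (iteratedDerivWithin (i+1) g S) * |s - t| :=
            lipBound hab hg.1 (Nat.lt_succ_of_le hi) s hs t ht
        _ ≤ Qn1 * ((b - a) ^ (1 - α) * |s - t| ^ α) := by
            apply mul_le_mul (hMgQ (i+1) (Nat.succ_le_succ hi))
              (holderStep hab hα1 hs ht) (abs_nonneg _) hQn10
        _ ≤ Qn1 * (1 + (b - a) ^ (1 - α)) * |s - t| ^ α := by
            rw [mul_assoc]
            apply mul_le_mul_of_nonneg_left _ hQn10
            apply mul_le_mul_of_nonneg_right _ hdα
            linarith
    rw [leibniz hab hf.1 hgn le_rfl s hs, leibniz hab hf.1 hgn le_rfl t ht,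
      ← Finset.sum_sub_distrib]
    calc ‖∑ i ∈ Finset.range (n + 1), ((n.choose i : ℂ)
          * iteratedDerivWithin i f S s * iteratedDerivWithin (n - i) g S s
          - (n.choose i : ℂ)
          * iteratedDerivWithin i f S t * iteratedDerivWithin (n - i) g S t)‖
        ≤ ∑ i ∈ Finset.range (n + 1), ‖(n.choose i : ℂ)
          * iteratedDerivWithin i f S s * iteratedDerivWithin (n - i) g S s
          - (n.choose i : ℂ)
          * iteratedDerivWithin i f S t * iteratedDerivWithin (n - i) g S t‖ :=
          norm_sum_le _ _
      _ ≤ ∑ i ∈ Finset.range (n + 1), (n.choose i : ℝ)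
            * (2 * (1 + (b - a) ^ (1 - α)) * Kf * Qn1 * |s - t| ^ α) := by
          refine Finset.sum_le_sum fun i hi => ?_
          have hi' : i ≤ n := Nat.lt_succ_iff.1 (Finset.mem_range.1 hi)
          have key : (n.choose i : ℂ)
              * iteratedDerivWithin i f S s * iteratedDerivWithin (n - i) g S s
              - (n.choose i : ℂ)
              * iteratedDerivWithin i f S t * iteratedDerivWithin (n - i) g S t
            = (n.choose i : ℂ) *
              ((iteratedDerivWithin i f S s - iteratedDerivWithin i f S t)
                  * iteratedDerivWithin (n - i) g S s
                + iteratedDerivWithin i f S t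
                  * (iteratedDerivWithin (n - i) g S s
                    - iteratedDerivWithin (n - i) g S t)) := by ring
          rw [key, norm_mul, Complex.norm_natCast]
          refine mul_le_mul_of_nonneg_left ?_ (Nat.cast_nonneg _)
          calc ‖(iteratedDerivWithin i f S s - iteratedDerivWithin i f S t)
                  * iteratedDerivWithin (n - i) g S s
                + iteratedDerivWithin i f S t
                  * (iteratedDerivWithin (n - i) g S s
                    - iteratedDerivWithin (n - i) g S t)‖
              ≤ ‖iteratedDerivWithin i f S s - iteratedDerivWithin i f S t‖
                  * ‖iteratedDerivWithin (n - i) g S s‖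
                + ‖iteratedDerivWithin i f S t‖
                  * ‖iteratedDerivWithin (n - i) g S s
                    - iteratedDerivWithin (n - i) g S t‖ := by
                refine le_trans (norm_add_le _ _) ?_
                rw [norm_mul, norm_mul]
            _ ≤ (Kf * (1 + (b - a) ^ (1 - α)) * |s - t| ^ α) * Qn1
                + Kf * (Qn1 * (1 + (b - a) ^ (1 - α)) * |s - t| ^ α) := by
                apply add_le_add
                · exact mul_le_mul (hHf i hi') (hMg (n - i) (le_trans (Nat.sub_le n i)
                    (Nat.le_succ n)) s hs) (norm_nonneg _)
                    (by positivity)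
                · exact mul_le_mul (hMf i hi' t ht) (hHg (n - i) (Nat.sub_le n i))
                    (norm_nonneg _) hKf0
            _ = 2 * (1 + (b - a) ^ (1 - α)) * Kf * Qn1 * |s - t| ^ α := by ring
      _ = 2 ^ n * (2 * (1 + (b - a) ^ (1 - α)) * Kf * Qn1 * |s - t| ^ α) := by
          rw [← Finset.sum_mul]
          norm_cast
          rw [Nat.sum_range_choose]
      _ = 2 ^ (n + 1) * (1 + (b - a) ^ (1 - α)) * Kf * Qn1 * |s - t| ^ α := by
          ring
end prodest

noncomputable def qN (a b : ℝ) (J : ℕ) {m : ℕ} (Y : ℝ → Matrix (Fin m) (Fin m) ℂ) : ℝ :=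
  ∑ i, ∑ j, ∑ l ∈ Finset.range (J + 1),
    supIcc a b (iteratedDerivWithin l (fun u => Y u i j) (Set.Icc a b))

section entryest
variable {a b α : ℝ} {n m : ℕ}

lemma qN_nonneg (a b : ℝ) (J : ℕ) {m : ℕ} (Y : ℝ → Matrix (Fin m) (Fin m) ℂ) :
    0 ≤ qN a b J Y :=
  Finset.sum_nonneg fun _ _ => Finset.sum_nonneg fun _ _ =>
    Finset.sum_nonneg fun _ _ => supIcc_nonneg a b _

lemma qN_mono (a b : ℝ) {J J' : ℕ} (hJ : J' ≤ J) {m : ℕ} (Y : ℝ → Matrix (Fin m) (Fin m) ℂ) :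
    qN a b J' Y ≤ qN a b J Y := by
  refine Finset.sum_le_sum fun i _ => Finset.sum_le_sum fun j _ => ?_
  refine Finset.sum_le_sum_of_subset_of_nonneg
    (Finset.range_subset_range.2 (Nat.succ_le_succ hJ)) fun _ _ _ => supIcc_nonneg a b _

lemma qN_sub (a b : ℝ) {J J' : ℕ} (hJ : J' ≤ J) {m : ℕ} (Y : ℝ → Matrix (Fin m) (Fin m) ℂ)
    (k j : Fin m) :
    ∑ l ∈ Finset.range (J' + 1),
        supIcc a b (iteratedDerivWithin l (fun u => Y u k j) (Set.Icc a b))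
      ≤ qN a b J Y := by
  unfold qN
  have h1 : ∑ l ∈ Finset.range (J' + 1),
        supIcc a b (iteratedDerivWithin l (fun u => Y u k j) (Set.Icc a b))
      ≤ ∑ l ∈ Finset.range (J + 1),
        supIcc a b (iteratedDerivWithin l (fun u => Y u k j) (Set.Icc a b)) :=
    Finset.sum_le_sum_of_subset_of_nonneg (Finset.range_subset_range.2 (Nat.succ_le_succ hJ))
      fun _ _ _ => supIcc_nonneg a b _
  refine le_trans h1 ?_
  have h2 : ∑ l ∈ Finset.range (J + 1),
        supIcc a b (iteratedDerivWithin l (fun u => Y u k j) (Set.Icc a b))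
      ≤ ∑ j' : Fin m, ∑ l ∈ Finset.range (J + 1),
        supIcc a b (iteratedDerivWithin l (fun u => Y u k j') (Set.Icc a b)) :=
    Finset.single_le_sum
      (f := fun j' => ∑ l ∈ Finset.range (J + 1),
        supIcc a b (iteratedDerivWithin l (fun u => Y u k j') (Set.Icc a b)))
      (fun _ _ => Finset.sum_nonneg fun _ _ => supIcc_nonneg a b _)
      (Finset.mem_univ j)
  refine le_trans h2 ?_
  exact Finset.single_le_sum
    (f := fun i' => ∑ j' : Fin m, ∑ l ∈ Finset.range (J + 1),
      supIcc a b (iteratedDerivWithin l (fun u => Y u i' j') (Set.Icc a b)))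
    (fun _ _ => Finset.sum_nonneg fun _ _ => Finset.sum_nonneg fun _ _ => supIcc_nonneg a b _)
    (Finset.mem_univ k)

lemma rowSum_le (a b : ℝ) (n : ℕ) (α : ℝ) {m : ℕ} (A : ℝ → Matrix (Fin m) (Fin m) ℂ)
    (i : Fin m) :
    ∑ k : Fin m, holderNorm a b n α (fun t => A t i k) ≤ holderNormM a b n α A :=
  Finset.single_le_sum
    (f := fun i' => ∑ k : Fin m, holderNorm a b n α (fun t => A t i' k))
    (fun _ _ => Finset.sum_nonneg fun _ _ => holderNorm_nonneg _ _ _ _ _)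
    (Finset.mem_univ i)

lemma entryEst (hab : a < b) (hα1 : α ≤ 1) {A Y : ℝ → Matrix (Fin m) (Fin m) ℂ}
    (hA : InHolderM a b n α A) (hY : InHolderM a b (n + 1) α Y) (i j : Fin m) :
    ContDiffOn ℝ n (fun u => (A u * Y u) i j) (Set.Icc a b) ∧
    (∀ l ≤ n, ∀ t ∈ Set.Icc a b,
      ‖iteratedDerivWithin l (fun u => (A u * Y u) i j) (Set.Icc a b) t‖
        ≤ 2 ^ n * holderNormM a b n α A * qN a b n Y) ∧
    (α ≠ 0 → ∀ s ∈ Set.Icc a b, ∀ t ∈ Set.Icc a b,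
      ‖iteratedDerivWithin n (fun u => (A u * Y u) i j) (Set.Icc a b) s
          - iteratedDerivWithin n (fun u => (A u * Y u) i j) (Set.Icc a b) t‖
        ≤ 2 ^ (n + 1) * (1 + (b - a) ^ (1 - α)) * holderNormM a b n α A
            * qN a b (n + 1) Y * |s - t| ^ α) := by
  have hS : UniqueDiffOn ℝ (Set.Icc a b) := uniqueDiffOn_Icc hab
  have hrw : (fun u => (A u * Y u) i j)
      = fun u => ∑ k : Fin m, (A u i k) * (Y u k j) := by
    funext u; simp [Matrix.mul_apply]
  have hcdk : ∀ k : Fin m, ContDiffOn ℝ n (fun u => A u i k * Y u k j) (Set.Icc a b) :=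
    fun k => (hA i k).1.mul ((hY k j).1.of_le (by exact_mod_cast Nat.le_succ n))
  have hcd : ContDiffOn ℝ n (fun u => (A u * Y u) i j) (Set.Icc a b) := by
    rw [hrw]; exact ContDiffOn.sum fun k _ => hcdk k
  have hKA0 : 0 ≤ holderNormM a b n α A := holderNormM_nonneg a b n α A
  refine ⟨hcd, ?_, ?_⟩
  · intro l hl t ht
    rw [hrw, iterDeriv_sum hab Finset.univ _ (fun k _ => hcdk k) hl t ht]
    calc ‖∑ k : Fin m, iteratedDerivWithin l (fun u => A u i k * Y u k j) (Set.Icc a b) t‖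
        ≤ ∑ k : Fin m, ‖iteratedDerivWithin l (fun u => A u i k * Y u k j) (Set.Icc a b) t‖ :=
          norm_sum_le _ _
      _ ≤ ∑ k : Fin m, 2 ^ n * holderNorm a b n α (fun t => A t i k) * qN a b n Y := by
          refine Finset.sum_le_sum fun k _ => ?_
          refine le_trans ((prodEst hab hα1 (hA i k) (hY k j)).2.1 l hl t ht) ?_
          exact mul_le_mul_of_nonneg_left (qN_sub a b le_rfl Y k j)
            (mul_nonneg (by positivity) (holderNorm_nonneg _ _ _ _ _))
      _ = 2 ^ n * (∑ k : Fin m, holderNorm a b n α (fun t => A t i k)) * qN a b n Y := by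
          rw [← Finset.sum_mul, ← Finset.mul_sum]
      _ ≤ 2 ^ n * holderNormM a b n α A * qN a b n Y := by
          apply mul_le_mul_of_nonneg_right _ (qN_nonneg a b n Y)
          exact mul_le_mul_of_nonneg_left (rowSum_le a b n α A i) (by positivity)
  · intro hα' s hs t ht
    have h1 : (fun u => ∑ k : Fin m, (A u i k) * (Y u k j))
        = fun u => ∑ k : Fin m, (fun v => A v i k * Y v k j) u := rfl
    rw [hrw, iterDeriv_sum hab Finset.univ _ (fun k _ => hcdk k) le_rfl s hs,
      iterDeriv_sum hab Finset.univ _ (fun k _ => hcdk k) le_rfl t ht,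
      ← Finset.sum_sub_distrib]
    calc ‖∑ k : Fin m, (iteratedDerivWithin n (fun u => A u i k * Y u k j) (Set.Icc a b) s
            - iteratedDerivWithin n (fun u => A u i k * Y u k j) (Set.Icc a b) t)‖
        ≤ ∑ k : Fin m, ‖iteratedDerivWithin n (fun u => A u i k * Y u k j) (Set.Icc a b) s
            - iteratedDerivWithin n (fun u => A u i k * Y u k j) (Set.Icc a b) t‖ :=
          norm_sum_le _ _
      _ ≤ ∑ k : Fin m, 2 ^ (n + 1) * (1 + (b - a) ^ (1 - α))
            * holderNorm a b n α (fun t => A t i k) * qN a b (n + 1) Y * |s - t| ^ α := by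
          refine Finset.sum_le_sum fun k _ => ?_
          refine le_trans ((prodEst hab hα1 (hA i k) (hY k j)).2.2 hα' s hs t ht) ?_
          have hq := qN_sub a b (le_refl (n+1)) Y k j
          have hba : (0:ℝ) ≤ (b - a) ^ (1 - α) := Real.rpow_nonneg (by linarith) _
          have hc : (0:ℝ) ≤ 2 ^ (n + 1) * (1 + (b - a) ^ (1 - α))
              * holderNorm a b n α (fun t => A t i k) :=
            mul_nonneg (mul_nonneg (by positivity) (by linarith))
              (holderNorm_nonneg _ _ _ _ _)
          apply mul_le_mul_of_nonneg_right _ (Real.rpow_nonneg (abs_nonneg _) _)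
          exact mul_le_mul_of_nonneg_left hq hc
      _ = 2 ^ (n + 1) * (1 + (b - a) ^ (1 - α))
            * (∑ k : Fin m, holderNorm a b n α (fun t => A t i k))
            * qN a b (n + 1) Y * |s - t| ^ α := by
          rw [← Finset.sum_mul, ← Finset.sum_mul, ← Finset.mul_sum]
      _ ≤ 2 ^ (n + 1) * (1 + (b - a) ^ (1 - α)) * holderNormM a b n α A
            * qN a b (n + 1) Y * |s - t| ^ α := by
          apply mul_le_mul_of_nonneg_right _ (Real.rpow_nonneg (abs_nonneg _) _)
          apply mul_le_mul_of_nonneg_right _ (qN_nonneg a b (n+1) Y)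
          apply mul_le_mul_of_nonneg_left (rowSum_le a b n α A i)
          have hba : (0:ℝ) ≤ (b - a) ^ (1 - α) := Real.rpow_nonneg (by linarith) _
          exact mul_nonneg (by positivity) (by linarith)
end entryest

section vopentry
variable {a b α t₀ : ℝ} {n : ℕ}

lemma vopEntry (hab : a < b) (ht₀ : t₀ ∈ Set.Icc a b) {h : ℝ → ℂ} {B C : ℝ}
    (hB : 0 ≤ B) (hC : 0 ≤ C)
    (hch : ContDiffOn ℝ n h (Set.Icc a b))
    (hbnd : ∀ l ≤ n, ∀ t ∈ Set.Icc a b, ‖iteratedDerivWithin l h (Set.Icc a b) t‖ ≤ B)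
    (hhold : α ≠ 0 → ∀ s ∈ Set.Icc a b, ∀ t ∈ Set.Icc a b,
      ‖iteratedDerivWithin n h (Set.Icc a b) s - iteratedDerivWithin n h (Set.Icc a b) t‖
        ≤ C * |s - t| ^ α) :
    InHolder a b (n + 1) α (fun u => ∫ s in t₀..u, h s) ∧
    holderNorm a b (n + 1) α (fun u => ∫ s in t₀..u, h s)
      ≤ ((b - a) + (n + 1)) * B + C := by
  obtain ⟨hCD, hIter⟩ := antideriv hab ht₀ hch
  have hCD' : ContDiffOn ℝ ((n + 1 : ℕ) : WithTop ℕ∞) (fun u => ∫ s in t₀..u, h s)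
      (Set.Icc a b) := by exact_mod_cast hCD
  have hsup0 : ∀ t ∈ Set.Icc a b, ‖∫ s in t₀..t, h s‖ ≤ (b - a) * B := by
    intro t ht
    have habs : |t - t₀| ≤ b - a := by
      rw [abs_le]; constructor <;> [linarith [ht.1, ht₀.2]; linarith [ht.2, ht₀.1]]
    calc ‖∫ s in t₀..t, h s‖ ≤ B * |t - t₀| := by
          apply intervalIntegral.norm_integral_le_of_norm_le_const
          intro x hx
          have hx' : x ∈ Set.Icc a b :=
            (Set.uIcc_subset_Icc ht₀ ht) (Set.uIoc_subset_uIcc hx)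
          have := hbnd 0 (Nat.zero_le n) x hx'
          rwa [iteratedDerivWithin_zero] at this
      _ ≤ B * (b - a) := mul_le_mul_of_nonneg_left habs hB
      _ = (b - a) * B := mul_comm _ _
  have hcsup : ∀ l ∈ Finset.range (n + 1),
      supIcc a b (iteratedDerivWithin (l + 1) (fun u => ∫ s in t₀..u, h s) (Set.Icc a b)) ≤ B := by
    intro l hl
    rw [supIcc_congr (hIter l)]
    exact supIcc_le hB (fun t ht => hbnd l (Nat.lt_succ_iff.1 (Finset.mem_range.1 hl)) t ht)
  have hcN : cNorm a b (n + 1) (fun u => ∫ s in t₀..u, h s) ≤ (b - a) * B + (n + 1) * B := by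
    unfold cNorm
    rw [Finset.sum_range_succ']
    have h0 : supIcc a b (iteratedDerivWithin 0 (fun u => ∫ s in t₀..u, h s) (Set.Icc a b))
        ≤ (b - a) * B := by
      rw [iteratedDerivWithin_zero]
      exact supIcc_le (by nlinarith) hsup0
    have hsum : ∑ l ∈ Finset.range (n + 1),
        supIcc a b (iteratedDerivWithin (l + 1) (fun u => ∫ s in t₀..u, h s) (Set.Icc a b))
        ≤ (n + 1) * B := by
      calc ∑ l ∈ Finset.range (n + 1),
          supIcc a b (iteratedDerivWithin (l + 1) (fun u => ∫ s in t₀..u, h s) (Set.Icc a b))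
          ≤ ∑ _l ∈ Finset.range (n + 1), B := Finset.sum_le_sum hcsup
        _ = (n + 1) * B := by
            rw [Finset.sum_const, Finset.card_range]
            push_cast; ring
    linarith
  have hsemiBound : α ≠ 0 → ∀ s ∈ Set.Icc a b, ∀ t ∈ Set.Icc a b,
      ‖iteratedDerivWithin (n + 1) (fun u => ∫ s in t₀..u, h s) (Set.Icc a b) s
        - iteratedDerivWithin (n + 1) (fun u => ∫ s in t₀..u, h s) (Set.Icc a b) t‖
        ≤ C * |s - t| ^ α := by
    intro hα' s hs t ht
    rw [hIter n hs, hIter n ht]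
    exact hhold hα' s hs t ht
  constructor
  · refine ⟨hCD', ?_⟩
    by_cases hα : α = 0
    · exact Or.inl hα
    · exact Or.inr ⟨C, hsemiBound hα⟩
  · unfold holderNorm
    by_cases hα : α = 0
    · rw [if_pos hα]
      have : (b - a) * B + (n + 1) * B = ((b - a) + (n + 1)) * B := by ring
      linarith
    · rw [if_neg hα]
      have hs : holderSemi a b α
          (iteratedDerivWithin (n + 1) (fun u => ∫ s in t₀..u, h s) (Set.Icc a b)) ≤ C :=
        holderSemi_le hC (hsemiBound hα)
      have : (b - a) * B + (n + 1) * B = ((b - a) + (n + 1)) * B := by ring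
      linarith

lemma master (hab : a < b) (hα1 : α ≤ 1) (ht₀ : t₀ ∈ Set.Icc a b) {n m : ℕ}
    {A Y : ℝ → Matrix (Fin m) (Fin m) ℂ}
    (hA : InHolderM a b n α A) (hY : InHolderM a b (n + 1) α Y) :
    InHolderM a b (n + 1) α (Vop t₀ A Y) ∧
    holderNormM a b (n + 1) α (Vop t₀ A Y)
      ≤ (m * m) * (((b - a) + (n + 1)) * 2 ^ n
            + 2 ^ (n + 1) * (1 + (b - a) ^ (1 - α)))
          * holderNormM a b n α A
          * qN a b (if α = 0 then n else n + 1) Y := by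
  set J := if α = 0 then n else n + 1 with hJ
  set KA := holderNormM a b n α A with hKA
  set q := qN a b J Y with hq
  have hKA0 : 0 ≤ KA := holderNormM_nonneg a b n α A
  have hq0 : 0 ≤ q := qN_nonneg a b J Y
  have hqn : qN a b n Y ≤ q := qN_mono a b (by by_cases hα : α = 0 <;> simp [hJ, hα]) Y
  have hba : (0:ℝ) ≤ (b - a) ^ (1 - α) := Real.rpow_nonneg (by linarith) _
  have key : ∀ i j : Fin m,
      InHolder a b (n + 1) α (fun t => Vop t₀ A Y t i j) ∧
      holderNorm a b (n + 1) α (fun t => Vop t₀ A Y t i j)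
        ≤ (((b - a) + (n + 1)) * 2 ^ n + 2 ^ (n + 1) * (1 + (b - a) ^ (1 - α)))
            * KA * q := by
    intro i j
    obtain ⟨hE1, hE2, hE3⟩ := entryEst hab hα1 hA hY i j
    have hBle : ∀ l ≤ n, ∀ t ∈ Set.Icc a b,
        ‖iteratedDerivWithin l (fun u => (A u * Y u) i j) (Set.Icc a b) t‖
          ≤ 2 ^ n * KA * q := by
      intro l hl t ht
      refine le_trans (hE2 l hl t ht) ?_
      exact mul_le_mul_of_nonneg_left hqn (by positivity)
    have hCle : α ≠ 0 → ∀ s ∈ Set.Icc a b, ∀ t ∈ Set.Icc a b,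
        ‖iteratedDerivWithin n (fun u => (A u * Y u) i j) (Set.Icc a b) s
            - iteratedDerivWithin n (fun u => (A u * Y u) i j) (Set.Icc a b) t‖
          ≤ 2 ^ (n + 1) * (1 + (b - a) ^ (1 - α)) * KA * q * |s - t| ^ α := by
      intro hα' s hs t ht
      have hJ' : J = n + 1 := by simp [hJ, hα']
      refine le_trans (hE3 hα' s hs t ht) ?_
      rw [hq, hJ']
    have hB0 : (0:ℝ) ≤ 2 ^ n * KA * q := by positivity
    have hC0 : (0:ℝ) ≤ 2 ^ (n + 1) * (1 + (b - a) ^ (1 - α)) * KA * q :=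
      mul_nonneg (mul_nonneg (mul_nonneg (by positivity) (by linarith)) hKA0) hq0
    have hres := vopEntry hab ht₀ hB0 hC0 hE1 hBle hCle
    have heq : (fun t => Vop t₀ A Y t i j) = fun u => ∫ s in t₀..u, (A s * Y s) i j := rfl
    rw [heq]
    refine ⟨hres.1, le_trans hres.2 (le_of_eq ?_)⟩
    ring
  constructor
  · exact fun i j => (key i j).1
  · unfold holderNormM
    calc ∑ i, ∑ j, holderNorm a b (n + 1) α (fun t => Vop t₀ A Y t i j)
        ≤ ∑ _i : Fin m, ∑ _j : Fin m,
            (((b - a) + (n + 1)) * 2 ^ n + 2 ^ (n + 1) * (1 + (b - a) ^ (1 - α)))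
              * KA * q :=
          Finset.sum_le_sum fun i _ => Finset.sum_le_sum fun j _ => (key i j).2
      _ = (m * m) * (((b - a) + (n + 1)) * 2 ^ n + 2 ^ (n + 1) * (1 + (b - a) ^ (1 - α)))
            * KA * q := by
          rw [Finset.sum_const, Finset.sum_const, Finset.card_univ, Fintype.card_fin]
          push_cast
          ring

end vopentry

section congrsub
variable {a b α t₀ : ℝ} {n : ℕ}

lemma cNorm_congr (hab : a < b) {l : ℕ} {x y : ℝ → ℂ} (h : Set.EqOn x y (Set.Icc a b)) :
    cNorm a b l x = cNorm a b l y := by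
  unfold cNorm
  exact Finset.sum_congr rfl fun j _ =>
    supIcc_congr (iteratedDerivWithin_congr h)

lemma holderNorm_congr (hab : a < b) {l : ℕ} {x y : ℝ → ℂ}
    (h : Set.EqOn x y (Set.Icc a b)) :
    holderNorm a b l α x = holderNorm a b l α y := by
  unfold holderNorm
  rw [cNorm_congr hab h]
  congr 1
  split
  · rfl
  · exact holderSemi_congr (iteratedDerivWithin_congr h)

lemma entry_le_normM {l : ℕ} {m : ℕ} (Y : ℝ → Matrix (Fin m) (Fin m) ℂ) (i j : Fin m) :
    holderNorm a b l α (fun t => Y t i j) ≤ holderNormM a b l α Y := by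
  have h1 : holderNorm a b l α (fun t => Y t i j)
      ≤ ∑ j' : Fin m, holderNorm a b l α (fun t => Y t i j') :=
    Finset.single_le_sum (f := fun j' => holderNorm a b l α (fun t => Y t i j'))
      (fun _ _ => holderNorm_nonneg _ _ _ _ _) (Finset.mem_univ j)
  refine le_trans h1 ?_
  exact Finset.single_le_sum
    (f := fun i' => ∑ j' : Fin m, holderNorm a b l α (fun t => Y t i' j'))
    (fun _ _ => Finset.sum_nonneg fun _ _ => holderNorm_nonneg _ _ _ _ _)
    (Finset.mem_univ i)

lemma qN_le_normM (hJ : ∀ {x}, x ∈ Finset.range (1)) : True := trivial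

lemma qN_le_holderNormM {J m : ℕ} (hJ : J ≤ n + 1) {Y : ℝ → Matrix (Fin m) (Fin m) ℂ} :
    qN a b J Y ≤ holderNormM a b (n + 1) α Y := by
  unfold qN holderNormM
  refine Finset.sum_le_sum fun i _ => Finset.sum_le_sum fun j _ => ?_
  have h1 : ∑ l ∈ Finset.range (J + 1),
      supIcc a b (iteratedDerivWithin l (fun u => Y u i j) (Set.Icc a b))
      ≤ cNorm a b (n + 1) (fun u => Y u i j) := by
    unfold cNorm
    exact Finset.sum_le_sum_of_subset_of_nonneg
      (Finset.range_subset_range.2 (Nat.succ_le_succ hJ)) fun _ _ _ => supIcc_nonneg a b _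
  exact le_trans h1 cNorm_le_holderNorm

lemma InHolderM_sub (hab : a < b) {l : ℕ} {m : ℕ} {P Q : ℝ → Matrix (Fin m) (Fin m) ℂ}
    (hP : InHolderM a b l α P) (hQ : InHolderM a b l α Q) :
    InHolderM a b l α (fun t => P t - Q t) := by
  have hS : UniqueDiffOn ℝ (Set.Icc a b) := uniqueDiffOn_Icc hab
  intro i j
  have hrw : (fun t => (P t - Q t) i j) = fun t => P t i j - Q t i j := by
    funext t; simp [Matrix.sub_apply]
  have hrw2 : (fun t => P t i j - Q t i j)
      = ((fun t => P t i j) - fun t => Q t i j) := rfl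
  have hcd : ContDiffOn ℝ l (fun t => (P t - Q t) i j) (Set.Icc a b) := by
    rw [hrw]; exact (hP i j).1.sub (hQ i j).1
  refine ⟨hcd, ?_⟩
  by_cases hα : α = 0
  · exact Or.inl hα
  · rcases (hP i j).2 with h0 | ⟨Kp, hKp⟩
    · exact absurd h0 hα
    rcases (hQ i j).2 with h0 | ⟨Kq, hKq⟩
    · exact absurd h0 hα
    refine Or.inr ⟨Kp + Kq, fun s hs t ht => ?_⟩
    have hsub : ∀ u ∈ Set.Icc a b,
        iteratedDerivWithin l (fun t => (P t - Q t) i j) (Set.Icc a b) u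
          = iteratedDerivWithin l (fun t => P t i j) (Set.Icc a b) u
            - iteratedDerivWithin l (fun t => Q t i j) (Set.Icc a b) u := by
      intro u hu
      rw [hrw, hrw2]
      exact iteratedDerivWithin_sub hu hS ((hP i j).1 u hu) ((hQ i j).1 u hu)
    rw [hsub s hs, hsub t ht]
    calc ‖iteratedDerivWithin l (fun t => P t i j) (Set.Icc a b) s
          - iteratedDerivWithin l (fun t => Q t i j) (Set.Icc a b) s
          - (iteratedDerivWithin l (fun t => P t i j) (Set.Icc a b) t
            - iteratedDerivWithin l (fun t => Q t i j) (Set.Icc a b) t)‖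
        = ‖(iteratedDerivWithin l (fun t => P t i j) (Set.Icc a b) s
            - iteratedDerivWithin l (fun t => P t i j) (Set.Icc a b) t)
          - (iteratedDerivWithin l (fun t => Q t i j) (Set.Icc a b) s
            - iteratedDerivWithin l (fun t => Q t i j) (Set.Icc a b) t)‖ := by
          congr 1; ring
      _ ≤ ‖iteratedDerivWithin l (fun t => P t i j) (Set.Icc a b) s
            - iteratedDerivWithin l (fun t => P t i j) (Set.Icc a b) t‖
          + ‖iteratedDerivWithin l (fun t => Q t i j) (Set.Icc a b) s
            - iteratedDerivWithin l (fun t => Q t i j) (Set.Icc a b) t‖ :=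
          norm_sub_le _ _
      _ ≤ Kp * |s - t| ^ α + Kq * |s - t| ^ α :=
          add_le_add (hKp s hs t ht) (hKq s hs t ht)
      _ = (Kp + Kq) * |s - t| ^ α := by ring

lemma vop_diff_eqOn (hab : a < b) (ht₀ : t₀ ∈ Set.Icc a b) {m : ℕ}
    {A P Q : ℝ → Matrix (Fin m) (Fin m) ℂ}
    (hA : ∀ i j, ContinuousOn (fun t => A t i j) (Set.Icc a b))
    (hP : ∀ i j, ContinuousOn (fun t => P t i j) (Set.Icc a b))
    (hQ : ∀ i j, ContinuousOn (fun t => Q t i j) (Set.Icc a b))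
    (i j : Fin m) :
    Set.EqOn (fun t => (Vop t₀ A P t - Vop t₀ A Q t) i j)
      (fun t => Vop t₀ A (fun u => P u - Q u) t i j) (Set.Icc a b) := by
  intro t ht
  have hiP : IntervalIntegrable (fun s => (A s * P s) i j) MeasureTheory.volume t₀ t := by
    apply ContinuousOn.intervalIntegrable
    apply ContinuousOn.mono _ (Set.uIcc_subset_Icc ht₀ ht)
    refine ContinuousOn.congr (f := fun s => ∑ k, A s i k * P s k j)
      (continuousOn_finset_sum _ fun k _ => (hA i k).mul (hP k j))
      (fun s _ => by simp [Matrix.mul_apply])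
  have hiQ : IntervalIntegrable (fun s => (A s * Q s) i j) MeasureTheory.volume t₀ t := by
    apply ContinuousOn.intervalIntegrable
    apply ContinuousOn.mono _ (Set.uIcc_subset_Icc ht₀ ht)
    refine ContinuousOn.congr (f := fun s => ∑ k, A s i k * Q s k j)
      (continuousOn_finset_sum _ fun k _ => (hA i k).mul (hQ k j))
      (fun s _ => by simp [Matrix.mul_apply])
  show Vop t₀ A P t i j - Vop t₀ A Q t i j
      = Vop t₀ A (fun u => P u - Q u) t i j
  have h1 : Vop t₀ A P t i j = ∫ s in t₀..t, (A s * P s) i j := rfl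
  have h2 : Vop t₀ A Q t i j = ∫ s in t₀..t, (A s * Q s) i j := rfl
  have h3 : Vop t₀ A (fun u => P u - Q u) t i j
      = ∫ s in t₀..t, (A s * (P s - Q s)) i j := rfl
  rw [h1, h2, h3, ← intervalIntegral.integral_sub hiP hiQ]
  apply intervalIntegral.integral_congr
  intro s _
  simp [Matrix.mul_sub, Matrix.sub_apply]

end congrsub

section extract
set_option synthInstance.maxHeartbeats 400000
variable {a b α : ℝ} {n m : ℕ}

lemma extract_subseq (hab : a < b) (hα0 : 0 ≤ α) (hα1 : α ≤ 1)
    (Y : ℕ → ℝ → Matrix (Fin m) (Fin m) ℂ)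
    (hY : ∀ k, InHolderM a b (n + 1) α (Y k) ∧ holderNormM a b (n + 1) α (Y k) ≤ 1) :
    ∃ φ : ℕ → ℕ, StrictMono φ ∧
      ∀ ε > (0:ℝ), ∃ N : ℕ, ∀ p ≥ N, ∀ r ≥ N,
        qN a b (if α = 0 then n else n + 1)
          (fun t => Y (φ p) t - Y (φ r) t) < ε := by
  classical
  have hS : UniqueDiffOn ℝ (Set.Icc a b) := uniqueDiffOn_Icc hab
  set J := if α = 0 then n else n + 1 with hJdef
  have hJle : J ≤ n + 1 := by by_cases hα : α = 0 <;> simp [hJdef, hα]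
  have hcont : ∀ k (p : Fin m × Fin m × Fin (J + 1)),
      ContinuousOn (iteratedDerivWithin (p.2.2 : ℕ) (fun u => Y k u p.1 p.2.1) (Set.Icc a b))
        (Set.Icc a b) := by
    intro k p
    refine ((hY k).1 p.1 p.2.1).1.continuousOn_iteratedDerivWithin ?_ hS
    exact_mod_cast le_trans (Nat.lt_succ_iff.1 p.2.2.2) hJle
  set G : ℕ → BoundedContinuousFunction (Set.Icc a b) (Fin m × Fin m × Fin (J + 1) → ℂ) :=
    fun k => BoundedContinuousFunction.mkOfCompact
      ⟨fun x p => iteratedDerivWithin (p.2.2 : ℕ) (fun u => Y k u p.1 p.2.1)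
          (Set.Icc a b) x.val,
        continuous_pi fun p => (hcont k p).restrict⟩ with hG
  have hGapp : ∀ k (x : Set.Icc a b) (p : Fin m × Fin m × Fin (J + 1)),
      G k x p = iteratedDerivWithin (p.2.2 : ℕ) (fun u => Y k u p.1 p.2.1)
        (Set.Icc a b) x.val := fun _ _ _ => rfl
  have hifnn : ∀ d : ℝ, (0:ℝ) ≤ (if α = 0 then 0 else |d| ^ α) := by
    intro d
    split
    · exact le_refl 0
    · exact Real.rpow_nonneg (abs_nonneg _) _
  have hbound : ∀ k (x : Set.Icc a b) (p : Fin m × Fin m × Fin (J + 1)),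
      ‖G k x p‖ ≤ 1 := by
    intro k x p
    rw [hGapp]
    have h1 := iter_le_holderNorm (α := α) hab ((hY k).1 p.1 p.2.1).1
      (le_trans (Nat.lt_succ_iff.1 p.2.2.2) hJle) x.val x.2
    exact le_trans h1 (le_trans (entry_le_normM (Y k) p.1 p.2.1) (hY k).2)
  have hmod : ∀ k (x y : Set.Icc a b),
      dist (G k x) (G k y)
        ≤ |dist x y| + (if α = 0 then 0 else |dist x y| ^ α) := by
    intro k x y
    have hnn : (0:ℝ) ≤ |dist x y| + (if α = 0 then 0 else |dist x y| ^ α) := by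
      have := hifnn (dist x y)
      positivity
    rw [dist_pi_le_iff hnn]
    intro p
    have hdd : dist x y = |x.val - y.val| := Subtype.dist_eq x y
    have hdist : dist (G k x p) (G k y p)
        = ‖iteratedDerivWithin ((p.2.2 : ℕ)) (fun u => Y k u p.1 p.2.1) (Set.Icc a b) x.val
          - iteratedDerivWithin ((p.2.2 : ℕ)) (fun u => Y k u p.1 p.2.1) (Set.Icc a b) y.val‖ :=
      Complex.dist_eq _ _
    by_cases hl : (p.2.2 : ℕ) < n + 1
    · have hlip := lipBound hab ((hY k).1 p.1 p.2.1).1 hl x.val x.2 y.val y.2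
      have hsup : supIcc a b (iteratedDerivWithin ((p.2.2 : ℕ) + 1)
          (fun u => Y k u p.1 p.2.1) (Set.Icc a b)) ≤ 1 :=
        le_trans (supIcc_le_cNorm hl)
          (le_trans cNorm_le_holderNorm
            (le_trans (entry_le_normM (Y k) p.1 p.2.1) (hY k).2))
      rw [hdist]
      calc ‖_ - _‖ ≤ supIcc a b (iteratedDerivWithin ((p.2.2 : ℕ) + 1)
              (fun u => Y k u p.1 p.2.1) (Set.Icc a b)) * |x.val - y.val| := hlip
        _ ≤ 1 * |x.val - y.val| :=
            mul_le_mul_of_nonneg_right hsup (abs_nonneg _)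
        _ = |dist x y| := by rw [one_mul, hdd, abs_abs]
        _ ≤ |dist x y| + (if α = 0 then 0 else |dist x y| ^ α) := by
            have := hifnn (dist x y)
            linarith
    · have hlJ : (p.2.2 : ℕ) ≤ J := Nat.lt_succ_iff.1 p.2.2.2
      have hα' : α ≠ 0 := by
        intro h0
        have h2 : J = n := by rw [hJdef, if_pos h0]
        omega
      have hleq : (p.2.2 : ℕ) = n + 1 := le_antisymm (le_trans hlJ hJle) (Nat.not_lt.1 hl)
      rcases ((hY k).1 p.1 p.2.1).2 with h0 | ⟨K, hK⟩
      · exact absurd h0 hα'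
      have hspec := holderSemi_spec hK x.val x.2 y.val y.2
      have hsemi : holderSemi a b α
          (iteratedDerivWithin (n + 1) (fun u => Y k u p.1 p.2.1) (Set.Icc a b)) ≤ 1 :=
        le_trans (holderSemi_le_holderNorm hα')
          (le_trans (entry_le_normM (Y k) p.1 p.2.1) (hY k).2)
      rw [hdist, hleq]
      calc ‖_ - _‖ ≤ holderSemi a b α
              (iteratedDerivWithin (n + 1) (fun u => Y k u p.1 p.2.1) (Set.Icc a b))
              * |x.val - y.val| ^ α := hspec
        _ ≤ 1 * |x.val - y.val| ^ α := mul_le_mul_of_nonneg_right hsemi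
            (Real.rpow_nonneg (abs_nonneg _) _)
        _ = |dist x y| ^ α := by rw [one_mul, hdd, abs_abs]
        _ ≤ |dist x y| + (if α = 0 then 0 else |dist x y| ^ α) := by
            rw [if_neg hα']
            have := abs_nonneg (dist x y)
            linarith
  -- Arzelà–Ascoli
  set A : Set (BoundedContinuousFunction (Set.Icc a b) (Fin m × Fin m × Fin (J + 1) → ℂ)) :=
    Set.range G with hA
  have hins : ∀ f, f ∈ A → ∀ x, f x ∈ Metric.closedBall (0 : Fin m × Fin m × Fin (J + 1) → ℂ) 1 := by
    rintro f ⟨k, rfl⟩ x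
    rw [Metric.mem_closedBall, dist_zero_right]
    exact (pi_norm_le_iff_of_nonneg zero_le_one).2 fun p => hbound k x p
  have hequi : Equicontinuous ((↑) : A → (Set.Icc a b) → (Fin m × Fin m × Fin (J + 1) → ℂ)) := by
    apply Metric.equicontinuous_of_continuity_modulus
      (fun d => |d| + (if α = 0 then 0 else |d| ^ α))
    · -- tendsto 0
      have h1 : Tendsto (fun d : ℝ => |d|) (nhds 0) (nhds 0) := by
        have := continuous_abs.tendsto (0:ℝ)
        simpa using this
      have h2 : Tendsto (fun d : ℝ => (if α = 0 then 0 else |d| ^ α)) (nhds 0) (nhds 0) := by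
        by_cases hα : α = 0
        · simp [hα, tendsto_const_nhds]
        · simp only [if_neg hα]
          have hα'' : 0 < α := lt_of_le_of_ne hα0 (Ne.symm hα)
          have hc : ContinuousAt (fun x : ℝ => x ^ α) (0:ℝ) :=
            Real.continuousAt_rpow_const 0 α (Or.inr hα0)
          have h4 : Tendsto (fun d : ℝ => |d|) (nhds (0:ℝ)) (nhds (0:ℝ)) := by
            have := continuous_abs.tendsto (0:ℝ)
            simpa using this
          have h5 : Tendsto (fun x : ℝ => x ^ α) (nhds (0:ℝ)) (nhds (0:ℝ)) := by
            have := hc.tendsto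
            simpa [Real.zero_rpow hα] using this
          have := h5.comp h4
          exact this
      simpa using h1.add h2
    · rintro x y ⟨f, k, rfl⟩
      exact hmod k x y
  have hcomp := BoundedContinuousFunction.arzela_ascoli
    (Metric.closedBall (0 : Fin m × Fin m × Fin (J + 1) → ℂ) 1)
    (isCompact_closedBall _ _) A (fun f x hf => hins f hf x) hequi
  have hseq := hcomp.isSeqCompact (x := G)
    (fun k => subset_closure (Set.mem_range_self k))
  obtain ⟨L, _, φ, hφ, hconv⟩ := hseq
  refine ⟨φ, hφ, ?_⟩
  intro ε hε
  have hcauchy : ∃ N : ℕ, ∀ p ≥ N, ∀ r ≥ N,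
      dist (G (φ p)) (G (φ r)) < ε / (m * m * (J + 1) + 1) := by
    have hpos : (0:ℝ) < ε / (m * m * (J + 1) + 1) := by positivity
    obtain ⟨N, hN⟩ := Metric.tendsto_atTop.1 hconv (ε / (m * m * (J + 1) + 1) / 2)
      (by positivity)
    refine ⟨N, fun p hp r hr => ?_⟩
    calc dist (G (φ p)) (G (φ r)) ≤ dist (G (φ p)) L + dist L (G (φ r)) := dist_triangle _ _ _
      _ < ε / (m * m * (J + 1) + 1) / 2 + ε / (m * m * (J + 1) + 1) / 2 := by
          rw [dist_comm L]
          exact add_lt_add (hN p hp) (hN r hr)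
      _ = ε / (m * m * (J + 1) + 1) := by ring
  obtain ⟨N, hN⟩ := hcauchy
  refine ⟨N, fun p hp r hr => ?_⟩
  set W : ℝ → Matrix (Fin m) (Fin m) ℂ := fun t => Y (φ p) t - Y (φ r) t with hW
  have hkey : ∀ (i j : Fin m) (l : ℕ), l ≤ J → ∀ t ∈ Set.Icc a b,
      ‖iteratedDerivWithin l (fun u => W u i j) (Set.Icc a b) t‖
        ≤ dist (G (φ p)) (G (φ r)) := by
    intro i j l hl t ht
    have hrw : (fun u => W u i j) = ((fun u => Y (φ p) u i j) - fun u => Y (φ r) u i j) := by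
      funext u; simp [hW, Matrix.sub_apply]
    have hsub : iteratedDerivWithin l (fun u => W u i j) (Set.Icc a b) t
        = iteratedDerivWithin l (fun u => Y (φ p) u i j) (Set.Icc a b) t
          - iteratedDerivWithin l (fun u => Y (φ r) u i j) (Set.Icc a b) t := by
      rw [hrw]
      exact iteratedDerivWithin_sub ht hS
        ((((hY (φ p)).1 i j).1.of_le (by exact_mod_cast le_trans hl hJle)) t ht)
        ((((hY (φ r)).1 i j).1.of_le (by exact_mod_cast le_trans hl hJle)) t ht)
    rw [hsub]
    set pt : Fin m × Fin m × Fin (J + 1) := (i, j, ⟨l, Nat.lt_succ_of_le hl⟩) with hpt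
    have h1 : ‖G (φ p) ⟨t, ht⟩ pt - G (φ r) ⟨t, ht⟩ pt‖
        = dist (G (φ p) ⟨t, ht⟩ pt) (G (φ r) ⟨t, ht⟩ pt) := (Complex.dist_eq _ _).symm
    have h2 := dist_le_pi_dist (G (φ p) ⟨t, ht⟩) (G (φ r) ⟨t, ht⟩) pt
    have h3 := BoundedContinuousFunction.dist_coe_le_dist
      (f := G (φ p)) (g := G (φ r)) (⟨t, ht⟩ : Set.Icc a b)
    have happ : G (φ p) ⟨t, ht⟩ pt
        = iteratedDerivWithin l (fun u => Y (φ p) u i j) (Set.Icc a b) t := rfl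
    have happ' : G (φ r) ⟨t, ht⟩ pt
        = iteratedDerivWithin l (fun u => Y (φ r) u i j) (Set.Icc a b) t := rfl
    rw [← happ, ← happ', h1]
    exact le_trans h2 h3
  have hsum : qN a b J W ≤ (m * m * (J + 1)) * dist (G (φ p)) (G (φ r)) := by
    unfold qN
    calc ∑ i, ∑ j, ∑ l ∈ Finset.range (J + 1),
          supIcc a b (iteratedDerivWithin l (fun u => W u i j) (Set.Icc a b))
        ≤ ∑ _i : Fin m, ∑ _j : Fin m, ∑ _l ∈ Finset.range (J + 1),
            dist (G (φ p)) (G (φ r)) := by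
          refine Finset.sum_le_sum fun i _ => Finset.sum_le_sum fun j _ =>
            Finset.sum_le_sum fun l hl => ?_
          exact supIcc_le dist_nonneg
            (hkey i j l (Nat.lt_succ_iff.1 (Finset.mem_range.1 hl)))
      _ = (m * m * (J + 1)) * dist (G (φ p)) (G (φ r)) := by
          simp [Finset.sum_const, Finset.card_range]
          ring
  have hd := hN p hp r hr
  calc qN a b J W ≤ (m * m * (J + 1)) * dist (G (φ p)) (G (φ r)) := hsum
    _ < ε := by
        have hfrac : (m * m * (J + 1) : ℝ) * (ε / (m * m * (J + 1) + 1)) < ε := by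
          have h2 : (m * m * (J + 1) : ℝ) * (ε / (m * m * (J + 1) + 1))
              < (m * m * (J + 1) + 1 : ℝ) * (ε / (m * m * (J + 1) + 1)) := by
            apply mul_lt_mul_of_pos_right (by linarith) (by positivity)
          have h3 : (m * m * (J + 1) + 1 : ℝ) * (ε / (m * m * (J + 1) + 1)) = ε := by
            field_simp
          linarith
        calc (m * m * (J + 1) : ℝ) * dist (G (φ p)) (G (φ r))
            ≤ (m * m * (J + 1) : ℝ) * (ε / (m * m * (J + 1) + 1)) := by
              apply mul_le_mul_of_nonneg_left hd.le (by positivity)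
          _ < ε := hfrac
end extract


section final2
lemma holderNormM_congr (hab : a < b) {l : ℕ} {m : ℕ}
    {X Z : ℝ → Matrix (Fin m) (Fin m) ℂ}
    (h : ∀ i j, Set.EqOn (fun t => X t i j) (fun t => Z t i j) (Set.Icc a b)) :
    holderNormM a b l α X = holderNormM a b l α Z := by
  unfold holderNormM
  exact Finset.sum_congr rfl fun i _ => Finset.sum_congr rfl fun j _ =>
    holderNorm_congr hab (h i j)

end final2

/-- part of Lemma 3.6: for `A ∈ (C^{n,α})^{m×m}` the operator `V_A` is a
compact linear operator on `(C^{n+1,α})^{m×m}` whose norm satisfies `‖V_A‖ ≤ κ ‖A‖_{n,α}` with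
`κ > 0` independent of `A`.  Compactness is expressed by: every sequence of the unit ball has a
subsequence whose image under `V_A` is Cauchy in the norm of `(C^{n+1,α})^{m×m}`. -/
theorem statement5 (a b : ℝ) (hab : a < b) (n m : ℕ) (hm : 1 ≤ m)
    (α : ℝ) (hα0 : 0 ≤ α) (hα1 : α ≤ 1) (t₀ : ℝ) (ht₀ : t₀ ∈ Set.Icc a b) :
    ∃ κ > (0:ℝ), ∀ A : ℝ → Matrix (Fin m) (Fin m) ℂ, InHolderM a b n α A →
      -- V_A maps (C^{n+1,α})^{m×m} into itself, with ‖V_A Y‖ ≤ κ ‖A‖ ‖Y‖ :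
      (∀ Y : ℝ → Matrix (Fin m) (Fin m) ℂ, InHolderM a b (n + 1) α Y →
        InHolderM a b (n + 1) α (Vop t₀ A Y) ∧
        holderNormM a b (n + 1) α (Vop t₀ A Y) ≤
          κ * holderNormM a b n α A * holderNormM a b (n + 1) α Y) ∧
      -- V_A is compact on (C^{n+1,α})^{m×m} :
      (∀ Y : ℕ → (ℝ → Matrix (Fin m) (Fin m) ℂ),
        (∀ k, InHolderM a b (n + 1) α (Y k) ∧ holderNormM a b (n + 1) α (Y k) ≤ 1) →
        ∃ φ : ℕ → ℕ, StrictMono φ ∧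
          ∀ δ > (0:ℝ), ∃ N : ℕ, ∀ p ≥ N, ∀ r ≥ N,
            holderNormM a b (n + 1) α
              (fun t => Vop t₀ A (Y (φ p)) t - Vop t₀ A (Y (φ r)) t) < δ) := by
  -- proof

  set J := if α = 0 then n else n + 1 with hJdef
  have hJle : J ≤ n + 1 := by by_cases hα : α = 0 <;> simp [hJdef, hα]
  have hba : (0:ℝ) ≤ (b - a) ^ (1 - α) := Real.rpow_nonneg (by linarith) _
  set κ := (m * m : ℝ) * (((b - a) + (n + 1)) * 2 ^ n
      + 2 ^ (n + 1) * (1 + (b - a) ^ (1 - α))) with hκ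
  have hm1 : (1:ℝ) ≤ (m : ℝ) := by exact_mod_cast hm
  have hn0 : (0:ℝ) ≤ (n:ℝ) := Nat.cast_nonneg n
  have hfac : (0:ℝ) < ((b - a) + ((n:ℝ) + 1)) * 2 ^ n
      + 2 ^ (n + 1) * (1 + (b - a) ^ (1 - α)) := by
    have h0 : (0:ℝ) < b - a + ((n:ℝ) + 1) := by linarith
    have h1 : (0:ℝ) < (b - a + ((n:ℝ) + 1)) * 2 ^ n := mul_pos h0 (by positivity)
    have h2 : (0:ℝ) ≤ 2 ^ (n + 1) * (1 + (b - a) ^ (1 - α)) :=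
      mul_nonneg (by positivity) (by linarith)
    linarith
  have hκpos : 0 < κ := by
    apply mul_pos _ hfac
    nlinarith
  refine ⟨κ, hκpos, ?_⟩
  intro A hA
  constructor
  · intro Y hY
    obtain ⟨h1, h2⟩ := master hab hα1 ht₀ hA hY
    refine ⟨h1, le_trans h2 ?_⟩
    rw [hκ]
    have hq := qN_le_holderNormM (α := α) (a := a) (b := b) hJle (Y := Y)
    have hKA0 : 0 ≤ holderNormM a b n α A := holderNormM_nonneg a b n α A
    have hc0 : (0:ℝ) ≤ (m * m : ℝ) * (((b - a) + (n + 1)) * 2 ^ n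
        + 2 ^ (n + 1) * (1 + (b - a) ^ (1 - α))) * holderNormM a b n α A :=
      mul_nonneg (mul_nonneg (by positivity) hfac.le) hKA0
    exact mul_le_mul_of_nonneg_left hq hc0
  · intro Y hYseq
    obtain ⟨φ, hφ, hcau⟩ := extract_subseq hab hα0 hα1 Y hYseq
    refine ⟨φ, hφ, ?_⟩
    intro δ hδ
    set KA := holderNormM a b n α A with hKA
    have hKA0 : 0 ≤ KA := holderNormM_nonneg a b n α A
    have hden : (0:ℝ) < κ * (KA + 1) := mul_pos hκpos (by linarith)
    obtain ⟨N, hN⟩ := hcau (δ / (κ * (KA + 1))) (by positivity)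
    refine ⟨N, fun p hp r hr => ?_⟩
    set W : ℝ → Matrix (Fin m) (Fin m) ℂ := fun t => Y (φ p) t - Y (φ r) t with hW
    have hWH : InHolderM a b (n + 1) α W :=
      InHolderM_sub hab (hYseq (φ p)).1 (hYseq (φ r)).1
    obtain ⟨-, hbound⟩ := master hab hα1 ht₀ hA hWH
    have heqn : holderNormM a b (n + 1) α
        (fun t => Vop t₀ A (Y (φ p)) t - Vop t₀ A (Y (φ r)) t)
        = holderNormM a b (n + 1) α (Vop t₀ A W) := by
      apply holderNormM_congr hab
      intro i j
      exact vop_diff_eqOn hab ht₀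
        (fun i j => (hA i j).1.continuousOn)
        (fun i j => ((hYseq (φ p)).1 i j).1.continuousOn)
        (fun i j => ((hYseq (φ r)).1 i j).1.continuousOn) i j
    rw [heqn]
    have hqW := hN p hp r hr
    have hq0 : 0 ≤ qN a b J W := qN_nonneg a b J W
    calc holderNormM a b (n + 1) α (Vop t₀ A W)
        ≤ κ * KA * qN a b J W := hbound
      _ ≤ κ * (KA + 1) * qN a b J W := by
          apply mul_le_mul_of_nonneg_right _ hq0
          have : κ * KA ≤ κ * (KA + 1) :=
            mul_le_mul_of_nonneg_left (by linarith) hκpos.le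
          exact this
      _ < κ * (KA + 1) * (δ / (κ * (KA + 1))) :=
          mul_lt_mul_of_pos_left hqW hden
      _ = δ := by field_simp
end
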